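/- arXiv:1510.04855 — 4 statements merged into one kernel-verified Lean document; each statement's English description precedes it below -/
import Mathlib

section
/- If g is a 1-periodic measurable function on ℝ taking values in {0,1} almost everywhere, and the Gagliardo seminorm ∫_{-1/2}^{1/2} ∫_{-1/2}^{1/2} |g(x+y)-g(x)|²/|y|² dx dy is finite (i.e., g ∈ H^{1/2}(ℝ/ℤ)), then either g = 0 almost everywhere or g = 1 almost everywhere. -/
open MeasureTheory Set ENNReal

lemma lint_per (φ : ℝ → ℝ≥0∞) (hφ : Function.Periodic φ 1) (t : ℝ) :
    ∫⁻ x in Set.Ioc t (t+1), φ x = ∫⁻ x in Set.Ioc 0 1, φ x := by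
  haveI : Fact ((0:ℝ) < 1) := ⟨one_pos⟩
  have h1 := AddCircle.lintegral_preimage 1 t hφ.lift
  have h2 := AddCircle.lintegral_preimage 1 0 hφ.lift
  simp only [Function.Periodic.lift_coe, zero_add] at h1 h2
  rw [h1, h2]

lemma lint_shift (φ : ℝ → ℝ≥0∞) (a b t : ℝ) :
    ∫⁻ x in Set.Ioc a b, φ (x + t) = ∫⁻ x in Set.Ioc (a+t) (b+t), φ x := by
  have := (measurePreserving_add_right volume t).setLIntegral_comp_emb
    (measurableEmbedding_addRight t) φ (Set.Ioc a b)
  rw [image_add_const_Ioc] at this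
  exact this

lemma lint_shift_per (φ : ℝ → ℝ≥0∞) (hφ : Function.Periodic φ 1) (t : ℝ) :
    ∫⁻ x in Set.Ioc (0:ℝ) 1, φ (x + t) = ∫⁻ x in Set.Ioc (0:ℝ) 1, φ x := by
  rw [lint_shift φ 0 1 t, zero_add, add_comm 1 t, lint_per φ hφ t]

lemma tri {a b c : ℝ} (ha : a = 0 ∨ a = 1) (hb : b = 0 ∨ b = 1) (hc : c = 0 ∨ c = 1) :
    |a - c|^2 ≤ |a - b|^2 + |b - c|^2 := by
  rcases ha with ha|ha <;> rcases hb with hb|hb <;> rcases hc with hc|hc <;>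
    subst ha <;> subst hb <;> subst hc <;> norm_num

lemma prodbound {a b : ℝ} (ha : a = 0 ∨ a = 1) (hb : b = 0 ∨ b = 1) :
    a * (1 - b) ≤ |a - b|^2 := by
  rcases ha with ha|ha <;> rcases hb with hb|hb <;> subst ha <;> subst hb <;> norm_num

lemma cover_pos {y : ℝ} (h0 : 0 < y) (h2 : y ≤ 1/2) :
    ∃ n : ℕ, y ∈ Set.Ioc ((1/2:ℝ)^(n+2)) ((1/2:ℝ)^(n+1)) := by
  classical
  have hex : ∃ k, (1/2:ℝ)^k < y := exists_pow_lt_of_lt_one h0 (by norm_num)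
  have hklt : (1/2:ℝ)^(Nat.find hex) < y := Nat.find_spec hex
  have hk2 : 2 ≤ Nat.find hex := by
    by_contra hlt
    push_neg at hlt
    interval_cases h : (Nat.find hex) <;> norm_num at hklt <;> linarith
  refine ⟨Nat.find hex - 2, ?_, ?_⟩
  · have h' : Nat.find hex - 2 + 2 = Nat.find hex := by omega
    rw [h']; exact hklt
  · have hlt : Nat.find hex - 2 + 1 < Nat.find hex := by omega
    have := Nat.find_min hex hlt
    linarith [not_lt.mp this]

lemma cover_neg {y : ℝ} (h0 : -(1/2) < y) (h2 : y < 0) :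
    ∃ n : ℕ, y ∈ Set.Ioc (-((1/2:ℝ)^(n+1))) (-((1/2:ℝ)^(n+2))) := by
  classical
  have hz0 : 0 < -y := by linarith
  have hz2 : -y < 1/2 := by linarith
  have hex : ∃ k, (1/2:ℝ)^k ≤ -y := by
    obtain ⟨k, hk⟩ := exists_pow_lt_of_lt_one hz0 (show (1/2:ℝ) < 1 by norm_num)
    exact ⟨k, hk.le⟩
  have hklt : (1/2:ℝ)^(Nat.find hex) ≤ -y := Nat.find_spec hex
  have hk2 : 2 ≤ Nat.find hex := by
    by_contra hlt
    push_neg at hlt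
    interval_cases h : (Nat.find hex) <;> norm_num at hklt <;> linarith
  refine ⟨Nat.find hex - 2, ?_, ?_⟩
  · have hlt : Nat.find hex - 2 + 1 < Nat.find hex := by omega
    have := Nat.find_min hex hlt
    push_neg at this
    linarith
  · have h' : Nat.find hex - 2 + 2 = Nat.find hex := by omega
    rw [h']; linarith

lemma key_pow {i j : ℕ} (h : i < j) : (1/2:ℝ)^(j+1) ≤ (1/2)^(i+2) :=
  pow_le_pow_of_le_one (by norm_num) (by norm_num) (by omega)

lemma disj_pos : Pairwise (Function.onFun Disjoint
    (fun n : ℕ => Set.Ioc ((1/2:ℝ)^(n+2)) ((1/2:ℝ)^(n+1)))) := by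
  intro i j hij
  rw [Function.onFun, Set.Ioc_disjoint_Ioc]
  rcases hij.lt_or_gt with h|h
  · exact min_le_of_right_le (le_trans (key_pow h) (le_max_left _ _))
  · exact min_le_of_left_le (le_trans (key_pow h) (le_max_right _ _))

lemma disj_neg : Pairwise (Function.onFun Disjoint
    (fun n : ℕ => Set.Ioc (-((1/2:ℝ)^(n+1))) (-((1/2:ℝ)^(n+2))))) := by
  intro i j hij
  rw [Function.onFun, Set.Ioc_disjoint_Ioc]
  rcases hij.lt_or_gt with h|h
  · exact min_le_of_left_le (le_trans (neg_le_neg (key_pow h)) (le_max_right _ _))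
  · exact min_le_of_right_le (le_trans (neg_le_neg (key_pow h)) (le_max_left _ _))

lemma scale_step (Φ : ℝ → ℝ≥0∞) (hmono : ∀ u, Φ (2*u) ≤ 2⁻¹ * Φ u) (a b : ℝ) :
    ∫⁻ y in Set.Ioc a b, Φ y ≤ ∫⁻ y in Set.Ioc (a/2) (b/2), Φ y := by
  have hemb : MeasurableEmbedding (fun x : ℝ => 2*x) :=
    measurableEmbedding_mulLeft₀ (by norm_num : (2:ℝ) ≠ 0)
  have hmap : (Measure.map (fun x:ℝ => 2*x) volume) = ENNReal.ofReal |(2:ℝ)⁻¹| • volume :=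
    Real.map_volume_mul_left (by norm_num : (2:ℝ) ≠ 0)
  have h1 : ∫⁻ u in Set.Ioc (a/2) (b/2), Φ (2*u) = 2⁻¹ * ∫⁻ y in Set.Ioc a b, Φ y := by
    have hres := Measure.restrict_map (f := fun x:ℝ => 2*x) (μ := volume)
      (measurable_const_mul 2) (measurableSet_Ioc (a := a) (b := b))
    have hpre : (fun x:ℝ => 2*x) ⁻¹' Set.Ioc a b = Set.Ioc (a/2) (b/2) :=
      Set.preimage_const_mul_Ioc₀ a b two_pos
    rw [hpre] at hres
    calc ∫⁻ u in Set.Ioc (a/2) (b/2), Φ (2*u)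
        = ∫⁻ y, Φ y ∂(Measure.map (fun x:ℝ => 2*x) (volume.restrict (Set.Ioc (a/2) (b/2)))) :=
          (hemb.lintegral_map Φ).symm
      _ = ∫⁻ y, Φ y ∂((Measure.map (fun x:ℝ => 2*x) volume).restrict (Set.Ioc a b)) := by
          rw [hres]
      _ = 2⁻¹ * ∫⁻ y in Set.Ioc a b, Φ y := by
          rw [hmap, Measure.restrict_smul, lintegral_smul_measure]
          congr 1
          rw [abs_of_pos (by norm_num : (0:ℝ) < 2⁻¹),
            ENNReal.ofReal_inv_of_pos two_pos]
          norm_num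
  calc ∫⁻ y in Set.Ioc a b, Φ y = 2 * (2⁻¹ * ∫⁻ y in Set.Ioc a b, Φ y) := by
        rw [← mul_assoc, ENNReal.mul_inv_cancel (by norm_num) (by norm_num), one_mul]
    _ = 2 * ∫⁻ u in Set.Ioc (a/2) (b/2), Φ (2*u) := by rw [h1]
    _ = ∫⁻ u in Set.Ioc (a/2) (b/2), 2 * Φ (2*u) := (lintegral_const_mul' 2 _ (by norm_num)).symm
    _ ≤ ∫⁻ u in Set.Ioc (a/2) (b/2), Φ u := by
        apply lintegral_mono; intro u
        calc 2 * Φ (2*u) ≤ 2 * (2⁻¹ * Φ u) := by gcongr; exact hmono u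
          _ = Φ u := by
            rw [← mul_assoc, ENNReal.mul_inv_cancel (by norm_num) (by norm_num), one_mul]

lemma dyadic_zero (Φ : ℝ → ℝ≥0∞)
    (hfin : ∫⁻ y in Set.Ioc (-(1:ℝ)/2) (1/2), Φ y < ⊤)
    (I : ℕ → Set ℝ) (hIm : ∀ n, MeasurableSet (I n))
    (hdisj : Pairwise (Function.onFun Disjoint I))
    (hsub : ∀ n, I n ⊆ Set.Ioc (-(1:ℝ)/2) (1/2))
    (hstep : ∀ n, ∫⁻ y in I n, Φ y ≤ ∫⁻ y in I (n+1), Φ y) :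
    ∀ n, ∫⁻ y in I n, Φ y = 0 := by
  have hmono' : ∀ n k, n ≤ k → ∫⁻ y in I n, Φ y ≤ ∫⁻ y in I k, Φ y := by
    intro n k hnk
    induction k, hnk using Nat.le_induction with
    | base => exact le_rfl
    | succ k hk ih => exact ih.trans (hstep k)
  intro m
  by_contra hne
  have hd2 : Pairwise (Function.onFun Disjoint (fun n : ℕ => I (m+n))) := by
    intro i j hij
    exact hdisj (show m+i ≠ m+j by omega)
  have hsum : ∑' n : ℕ, ∫⁻ y in I (m+n), Φ y = ∫⁻ y in ⋃ n, I (m+n), Φ y :=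
    (lintegral_iUnion (fun n => hIm _) hd2 Φ).symm
  have hle : ∫⁻ y in ⋃ n, I (m+n), Φ y ≤ ∫⁻ y in Set.Ioc (-(1:ℝ)/2) (1/2), Φ y :=
    lintegral_mono_set (Set.iUnion_subset fun n => hsub _)
  have htop : (⊤:ℝ≥0∞) ≤ ∑' n:ℕ, ∫⁻ y in I (m+n), Φ y := by
    calc (⊤:ℝ≥0∞) = ∑' _n : ℕ, ∫⁻ y in I m, Φ y :=
          (ENNReal.tsum_const_eq_top_of_ne_zero hne).symm
      _ ≤ ∑' n:ℕ, ∫⁻ y in I (m+n), Φ y :=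
          ENNReal.tsum_le_tsum fun n => hmono' m (m+n) (by omega)
  rw [hsum] at htop
  exact absurd (lt_of_le_of_lt (htop.trans hle) hfin) (by simp)

noncomputable def Fg (g : ℝ → ℝ) (y : ℝ) : ℝ≥0∞ :=
  ∫⁻ x in Set.Ioc (0:ℝ) 1, ENNReal.ofReal (|g (x + y) - g x| ^ 2)

noncomputable def Phig (g : ℝ → ℝ) (y : ℝ) : ℝ≥0∞ := Fg g y / ENNReal.ofReal (y^2)

section Aux
variable {g : ℝ → ℝ} (hmeas : Measurable g) (hper : ∀ x : ℝ, g (x + 1) = g x)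
  (hval : ∀ᵐ x : ℝ, g x = 0 ∨ g x = 1)
include hmeas hper hval
set_option linter.unusedSectionVars false

lemma hval_shift (c : ℝ) : ∀ᵐ x : ℝ, g (x + c) = 0 ∨ g (x + c) = 1 := by
  rw [ae_iff] at hval ⊢
  exact (measurePreserving_add_right volume c).quasiMeasurePreserving.preimage_null hval

lemma q_per (y : ℝ) :
    Function.Periodic (fun x => ENNReal.ofReal (|g (x + y) - g x| ^ 2)) 1 := by
  intro x
  simp only []
  rw [show x + 1 + y = (x + y) + 1 by ring, hper, hper]

lemma q_meas (y : ℝ) : Measurable (fun x => ENNReal.ofReal (|g (x + y) - g x| ^ 2)) :=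
  (((hmeas.comp (measurable_id.add_const y)).sub hmeas).abs.pow_const 2).ennreal_ofReal

lemma Fg_shift (y t : ℝ) :
    ∫⁻ x in Set.Ioc (0:ℝ) 1, ENNReal.ofReal (|g ((x + t) + y) - g (x + t)| ^ 2) = Fg g y :=
  lint_shift_per _ (q_per hmeas hper hval y) t

lemma Fg_subadd (y z : ℝ) : Fg g (y + z) ≤ Fg g y + Fg g z := by
  have h1 : ∀ᵐ x : ℝ ∂(volume.restrict (Set.Ioc (0:ℝ) 1)),
      ENNReal.ofReal (|g (x + (y+z)) - g x|^2)
        ≤ ENNReal.ofReal (|g ((x+z)+y) - g (x+z)|^2) + ENNReal.ofReal (|g (x+z) - g x|^2) := by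
    apply ae_restrict_of_ae
    filter_upwards [hval, hval_shift hmeas hper hval z, hval_shift hmeas hper hval (y+z)] with x h0 hz hyz
    have heq : x + (y+z) = (x+z)+y := by ring
    rw [heq] at hyz ⊢
    calc ENNReal.ofReal (|g ((x+z)+y) - g x|^2)
        ≤ ENNReal.ofReal (|g ((x+z)+y) - g (x+z)|^2 + |g (x+z) - g x|^2) :=
          ENNReal.ofReal_le_ofReal (tri hyz hz h0)
      _ = _ := ENNReal.ofReal_add (by positivity) (by positivity)
  calc Fg g (y+z) ≤ ∫⁻ x in Set.Ioc (0:ℝ) 1,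
        (ENNReal.ofReal (|g ((x+z)+y) - g (x+z)|^2) + ENNReal.ofReal (|g (x+z) - g x|^2)) :=
        lintegral_mono_ae h1
    _ = (∫⁻ x in Set.Ioc (0:ℝ) 1, ENNReal.ofReal (|g ((x+z)+y) - g (x+z)|^2))
        + ∫⁻ x in Set.Ioc (0:ℝ) 1, ENNReal.ofReal (|g (x+z) - g x|^2) :=
        lintegral_add_left ((((hmeas.comp ((measurable_id.add_const z).add_const y)).sub
          (hmeas.comp (measurable_id.add_const z))).abs.pow_const 2).ennreal_ofReal) _
    _ = Fg g y + Fg g z := by rw [Fg_shift hmeas hper hval y z]; rfl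

lemma Fg_two (u : ℝ) : Fg g (2*u) ≤ 2 * Fg g u := by
  calc Fg g (2*u) = Fg g (u+u) := by rw [two_mul]
    _ ≤ Fg g u + Fg g u := Fg_subadd hmeas hper hval u u
    _ = 2 * Fg g u := (two_mul _).symm

lemma Phig_mono (u : ℝ) : Phig g (2*u) ≤ 2⁻¹ * Phig g u := by
  unfold Phig
  have h4 : ENNReal.ofReal ((2*u)^2) = 4 * ENNReal.ofReal (u^2) := by
    rw [show (2*u)^2 = 4 * u^2 by ring, ENNReal.ofReal_mul (by norm_num : (0:ℝ) ≤ 4)]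
    norm_num
  have h24 : (2:ℝ≥0∞) * 4⁻¹ = 2⁻¹ := by
    rw [show (4:ℝ≥0∞) = 2*2 by norm_num,
      ENNReal.mul_inv (Or.inl (by norm_num)) (Or.inl (by norm_num)), ← mul_assoc,
      ENNReal.mul_inv_cancel (by norm_num) (by norm_num), one_mul]
  rw [h4]
  calc Fg g (2*u) / (4 * ENNReal.ofReal (u^2))
      ≤ (2 * Fg g u) / (4 * ENNReal.ofReal (u^2)) :=
        ENNReal.div_le_div_right (Fg_two hmeas hper hval u) _
    _ = 2⁻¹ * (Fg g u / ENNReal.ofReal (u^2)) := by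
        rw [div_eq_mul_inv, div_eq_mul_inv,
          ENNReal.mul_inv (Or.inl (by norm_num)) (Or.inl (by norm_num))]
        calc 2 * Fg g u * (4⁻¹ * (ENNReal.ofReal (u^2))⁻¹)
            = (2 * 4⁻¹) * (Fg g u * (ENNReal.ofReal (u^2))⁻¹) := by ring
          _ = _ := by rw [h24]

lemma Fg_meas : Measurable (Fg g) := by
  apply Measurable.lintegral_prod_right'
    (f := fun p : ℝ × ℝ => ENNReal.ofReal (|g (p.2 + p.1) - g p.2|^2))
  exact (((hmeas.comp (measurable_snd.add measurable_fst)).sub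
    (hmeas.comp measurable_snd)).abs.pow_const 2).ennreal_ofReal

lemma Phig_meas : Measurable (Phig g) :=
  (Fg_meas hmeas hper hval).div ((measurable_id.pow_const 2).ennreal_ofReal)

lemma Fg_per : Function.Periodic (Fg g) 1 := by
  intro y
  unfold Fg
  apply lintegral_congr
  intro x
  rw [show x + (y + 1) = (x + y) + 1 by ring, hper]

lemma periodize (c : ℝ)
    (h : ∀ᵐ x ∂(volume.restrict (Set.Ioc (0:ℝ) 1)), g x = c) : ∀ᵐ x : ℝ, g x = c := by
  have hp : Function.Periodic g 1 := hper
  have hint : ∀ (n : ℤ) (x : ℝ), g (x + n) = g x := by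
    intro n x
    simpa using (hp.int_mul n) x
  have hb0 : volume ({x : ℝ | ¬ g x = c} ∩ Set.Ioc 0 1) = 0 := by
    have := ae_iff.mp h
    rwa [Measure.restrict_apply' measurableSet_Ioc] at this
  rw [ae_iff]
  have hcover : {x : ℝ | ¬ g x = c} ⊆
      ⋃ n : ℤ, ({x : ℝ | ¬ g x = c} ∩ Set.Ioc ((n:ℝ)) ((n:ℝ)+1)) := by
    intro x hx
    refine Set.mem_iUnion.mpr ⟨⌈x⌉ - 1, hx, ?_, ?_⟩
    · push_cast
      linarith [Int.ceil_lt_add_one x]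
    · push_cast
      linarith [Int.le_ceil x]
  refine measure_mono_null hcover (measure_iUnion_null fun n => ?_)
  have heq : {x : ℝ | ¬ g x = c} ∩ Set.Ioc ((n:ℝ)) ((n:ℝ)+1)
      = (fun x => x + (-(n:ℝ))) ⁻¹' ({x : ℝ | ¬ g x = c} ∩ Set.Ioc 0 1) := by
    ext x
    have hgx : g (x + (-(n:ℝ))) = g x := by
      rw [show x + (-(n:ℝ)) = x + ((-n : ℤ):ℝ) by push_cast; ring, hint]
    simp only [Set.mem_inter_iff, Set.mem_preimage, Set.mem_Ioc, Set.mem_setOf_eq, hgx]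
    constructor
    · rintro ⟨h1, h2, h3⟩
      exact ⟨h1, by linarith, by linarith⟩
    · rintro ⟨h1, h2, h3⟩
      exact ⟨h1, by linarith, by linarith⟩
  rw [heq]
  exact (measurePreserving_add_right volume (-(n:ℝ))).quasiMeasurePreserving.preimage_null hb0

end Aux


/-- If `g` is a 1-periodic measurable function on `ℝ` taking values in `{0,1}` a.e.,
and its `H^{1/2}` Gagliardo seminorm over the fundamental domain is finite, then
`g = 0` a.e. or `g = 1` a.e. -/
theorem stmt0 (g : ℝ → ℝ) (hmeas : Measurable g)
    (hper : ∀ x : ℝ, g (x + 1) = g x)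
    (hval : ∀ᵐ x : ℝ, g x = 0 ∨ g x = 1)
    (hsob : (∫⁻ x in Set.Ico (-(1:ℝ)/2) (1/2), ∫⁻ y in Set.Ico (-(1:ℝ)/2) (1/2),
      ENNReal.ofReal (|g (x + y) - g x| ^ 2 / |y| ^ 2)) < ⊤) :
    (∀ᵐ x : ℝ, g x = 0) ∨ (∀ᵐ x : ℝ, g x = 1) := by
  classical
  have hfmeas : Measurable (Function.uncurry fun x y : ℝ =>
      ENNReal.ofReal (|g (x + y) - g x| ^ 2 / |y| ^ 2)) := by
    apply Measurable.ennreal_ofReal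
    exact (((hmeas.comp (measurable_fst.add measurable_snd)).sub
      (hmeas.comp measurable_fst)).abs.pow_const 2).div
      ((measurable_snd.abs).pow_const 2)
  rw [lintegral_lintegral_swap hfmeas.aemeasurable] at hsob
  have hIcoIoc : (volume : Measure ℝ).restrict (Set.Ico (-(1:ℝ)/2) (1/2))
      = volume.restrict (Set.Ioc (-(1:ℝ)/2) (1/2)) := Measure.restrict_congr_set Ico_ae_eq_Ioc
  rw [hIcoIoc] at hsob
  have hy0 : ∀ᵐ y : ℝ ∂(volume.restrict (Set.Ioc (-(1:ℝ)/2) (1/2))), y ≠ 0 := by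
    apply ae_restrict_of_ae
    rw [ae_iff]
    have hset : {y : ℝ | ¬ y ≠ 0} = {0} := by ext y; simp
    rw [hset]
    exact measure_singleton 0
  have hident : ∫⁻ y in Set.Ioc (-(1:ℝ)/2) (1/2), Phig g y
      = ∫⁻ y in Set.Ioc (-(1:ℝ)/2) (1/2), ∫⁻ x in Set.Ioc (-(1:ℝ)/2) (1/2),
          ENNReal.ofReal (|g (x + y) - g x| ^ 2 / |y| ^ 2) := by
    apply lintegral_congr_ae
    filter_upwards [hy0] with y hy
    have hy2 : 0 < |y|^2 := by positivity
    calc Phig g y = (∫⁻ x in Set.Ioc (-(1:ℝ)/2) (1/2),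
            ENNReal.ofReal (|g (x + y) - g x| ^ 2)) * (ENNReal.ofReal (y^2))⁻¹ := by
          unfold Phig Fg
          rw [div_eq_mul_inv]
          congr 1
          rw [show ((1:ℝ)/2) = -(1:ℝ)/2 + 1 from by norm_num]
          exact (lint_per _ (q_per hmeas hper hval y) _).symm
      _ = ∫⁻ x in Set.Ioc (-(1:ℝ)/2) (1/2),
            ENNReal.ofReal (|g (x + y) - g x| ^ 2) * (ENNReal.ofReal (y^2))⁻¹ :=
          (lintegral_mul_const'' _ (q_meas hmeas hper hval y).aemeasurable).symm
      _ = _ := by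
          apply lintegral_congr
          intro x
          rw [ENNReal.ofReal_div_of_pos hy2, div_eq_mul_inv, sq_abs y]
  have hfin : ∫⁻ y in Set.Ioc (-(1:ℝ)/2) (1/2), Phig g y < ⊤ := by rw [hident]; exact hsob
  have hmono := Phig_mono hmeas hper hval
  have hzp : ∀ n, ∫⁻ y in Set.Ioc ((1/2:ℝ)^(n+2)) ((1/2:ℝ)^(n+1)), Phig g y = 0 := by
    apply dyadic_zero (Phig g) hfin _ (fun n => measurableSet_Ioc) disj_pos
    · intro n
      apply Set.Ioc_subset_Ioc
      · have := pow_pos (show (0:ℝ) < 1/2 by norm_num) (n+2)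
        linarith
      · calc (1/2:ℝ)^(n+1) ≤ (1/2)^1 :=
            pow_le_pow_of_le_one (by norm_num) (by norm_num) (by omega)
          _ = 1/2 := pow_one _
    · intro n
      have h := scale_step (Phig g) hmono ((1/2:ℝ)^(n+2)) ((1/2:ℝ)^(n+1))
      rwa [show (1/2:ℝ)^(n+2)/2 = (1/2)^(n+3) from by rw [pow_succ]; ring,
        show (1/2:ℝ)^(n+1)/2 = (1/2)^(n+2) from by rw [pow_succ]; ring] at h
  have hzn : ∀ n, ∫⁻ y in Set.Ioc (-((1/2:ℝ)^(n+1))) (-((1/2:ℝ)^(n+2))), Phig g y = 0 := by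
    apply dyadic_zero (Phig g) hfin _ (fun n => measurableSet_Ioc) disj_neg
    · intro n
      apply Set.Ioc_subset_Ioc
      · have : (1/2:ℝ)^(n+1) ≤ (1/2)^1 :=
          pow_le_pow_of_le_one (by norm_num) (by norm_num) (by omega)
        rw [pow_one] at this
        linarith
      · have := pow_pos (show (0:ℝ) < 1/2 by norm_num) (n+2)
        linarith
    · intro n
      have h := scale_step (Phig g) hmono (-((1/2:ℝ)^(n+1))) (-((1/2:ℝ)^(n+2)))
      rwa [show -((1/2:ℝ)^(n+1))/2 = -((1/2)^(n+2)) from by rw [pow_succ]; ring,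
        show -((1/2:ℝ)^(n+2))/2 = -((1/2)^(n+3)) from by rw [pow_succ]; ring] at h
  have hPm := Phig_meas hmeas hper hval
  have hz1 : ∀ᵐ y : ℝ, ∀ n : ℕ,
      y ∈ Set.Ioc ((1/2:ℝ)^(n+2)) ((1/2:ℝ)^(n+1)) → Phig g y = 0 := by
    rw [ae_all_iff]
    intro n
    exact (ae_restrict_iff' measurableSet_Ioc).mp ((lintegral_eq_zero_iff hPm).mp (hzp n))
  have hz2 : ∀ᵐ y : ℝ, ∀ n : ℕ,
      y ∈ Set.Ioc (-((1/2:ℝ)^(n+1))) (-((1/2:ℝ)^(n+2))) → Phig g y = 0 := by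
    rw [ae_all_iff]
    intro n
    exact (ae_restrict_iff' measurableSet_Ioc).mp ((lintegral_eq_zero_iff hPm).mp (hzn n))
  have hPhiFg : ∀ y : ℝ, Phig g y = 0 → Fg g y = 0 := by
    intro y h
    rcases ENNReal.div_eq_zero_iff.mp h with h'|h'
    · exact h'
    · exact absurd h' ENNReal.ofReal_ne_top
  have hF0 : ∀ᵐ y ∂(volume.restrict (Set.Ioc (-(1:ℝ)/2) (1/2))), Fg g y = 0 := by
    rw [ae_restrict_iff' measurableSet_Ioc]
    filter_upwards [hz1, hz2] with y h1 h2 hy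
    rcases lt_trichotomy y 0 with hneg|h0|hpos
    · obtain ⟨n, hn⟩ := cover_neg (by linarith [hy.1]) hneg
      exact hPhiFg y (h2 n hn)
    · subst h0
      calc Fg g 0 = ∫⁻ x in Set.Ioc (0:ℝ) 1, 0 := by
            apply lintegral_congr
            intro x
            rw [add_zero, sub_self, abs_zero]
            norm_num
        _ = 0 := lintegral_zero
    · obtain ⟨n, hn⟩ := cover_pos hpos (by linarith [hy.2])
      exact hPhiFg y (h1 n hn)
  have hFint : ∫⁻ y in Set.Ioc (-(1:ℝ)/2) (1/2), Fg g y = 0 := by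
    calc ∫⁻ y in Set.Ioc (-(1:ℝ)/2) (1/2), Fg g y
        = ∫⁻ _y in Set.Ioc (-(1:ℝ)/2) (1/2), 0 := lintegral_congr_ae hF0
      _ = 0 := lintegral_zero
  have hFint01 : ∫⁻ y in Set.Ioc (0:ℝ) 1, Fg g y = 0 := by
    rw [← lint_per (Fg g) (Fg_per hmeas hper hval) (-(1:ℝ)/2),
      show -(1:ℝ)/2 + 1 = 1/2 from by norm_num]
    exact hFint
  -- product bound
  have hGm : Measurable (fun t : ℝ => ENNReal.ofReal (g t)) := hmeas.ennreal_ofReal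
  have hHm : Measurable (fun t : ℝ => ENNReal.ofReal (1 - g t)) :=
    (measurable_const.sub hmeas).ennreal_ofReal
  have hGper : Function.Periodic (fun t : ℝ => ENNReal.ofReal (g t)) 1 := by
    intro x
    simp only []
    rw [hper]
  have hkey : ∫⁻ y in Set.Ioc (0:ℝ) 1, ∫⁻ x in Set.Ioc (0:ℝ) 1,
      ENNReal.ofReal (g (x+y)) * ENNReal.ofReal (1 - g x) = 0 := by
    refine le_antisymm ?_ zero_le
    rw [← hFint01]
    apply lintegral_mono
    intro y
    apply lintegral_mono_ae
    apply ae_restrict_of_ae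
    filter_upwards [hval, hval_shift hmeas hper hval y] with x h0 hy
    have hg0 : 0 ≤ g (x+y) := by rcases hy with h|h <;> rw [h] <;> norm_num
    calc ENNReal.ofReal (g (x+y)) * ENNReal.ofReal (1 - g x)
        = ENNReal.ofReal (g (x+y) * (1 - g x)) := (ENNReal.ofReal_mul hg0).symm
      _ ≤ ENNReal.ofReal (|g (x+y) - g x|^2) := ENNReal.ofReal_le_ofReal (prodbound hy h0)
  have hswapmeas : Measurable (Function.uncurry fun x y : ℝ =>
      ENNReal.ofReal (g (x+y)) * ENNReal.ofReal (1 - g x)) :=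
    ((hmeas.comp (measurable_fst.add measurable_snd)).ennreal_ofReal).mul
      (((measurable_const.sub hmeas).comp measurable_fst).ennreal_ofReal)
  have hswap2 : ∫⁻ x in Set.Ioc (0:ℝ) 1, ∫⁻ y in Set.Ioc (0:ℝ) 1,
      ENNReal.ofReal (g (x+y)) * ENNReal.ofReal (1 - g x) = 0 := by
    rw [lintegral_lintegral_swap hswapmeas.aemeasurable]
    exact hkey
  have hMle : (∫⁻ t in Set.Ioc (0:ℝ) 1, ENNReal.ofReal (g t)) ≤ 1 := by
    calc (∫⁻ t in Set.Ioc (0:ℝ) 1, ENNReal.ofReal (g t))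
        ≤ ∫⁻ _t in Set.Ioc (0:ℝ) 1, 1 := by
          apply lintegral_mono_ae
          apply ae_restrict_of_ae
          filter_upwards [hval] with x hx
          rcases hx with h|h <;> simp [h]
      _ = 1 := by rw [setLIntegral_one, Real.volume_Ioc]; norm_num
  have hMne : (∫⁻ t in Set.Ioc (0:ℝ) 1, ENNReal.ofReal (g t)) ≠ ⊤ :=
    (lt_of_le_of_lt hMle (by norm_num)).ne
  have hinner : ∀ x : ℝ, ∫⁻ y in Set.Ioc (0:ℝ) 1,
      ENNReal.ofReal (g (x+y)) * ENNReal.ofReal (1 - g x)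
      = (∫⁻ t in Set.Ioc (0:ℝ) 1, ENNReal.ofReal (g t)) * ENNReal.ofReal (1 - g x) := by
    intro x
    rw [lintegral_mul_const' (ENNReal.ofReal (1 - g x)) _ ENNReal.ofReal_ne_top]
    congr 1
    calc ∫⁻ y in Set.Ioc (0:ℝ) 1, ENNReal.ofReal (g (x+y))
        = ∫⁻ y in Set.Ioc (0:ℝ) 1, ENNReal.ofReal (g (y+x)) := by
          apply lintegral_congr
          intro y
          rw [add_comm]
      _ = _ := lint_shift_per _ hGper x
  have hMN : (∫⁻ t in Set.Ioc (0:ℝ) 1, ENNReal.ofReal (g t))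
      * (∫⁻ x in Set.Ioc (0:ℝ) 1, ENNReal.ofReal (1 - g x)) = 0 := by
    rw [← lintegral_const_mul' _ _ hMne, ← hswap2]
    apply lintegral_congr
    intro x
    exact (hinner x).symm
  rcases mul_eq_zero.mp hMN with hM0|hN0
  · left
    apply periodize hmeas hper hval 0
    have hG0 := (lintegral_eq_zero_iff hGm).mp hM0
    filter_upwards [hG0, ae_restrict_of_ae hval] with x h1 h2
    rcases h2 with h|h
    · exact h
    · rw [h] at h1
      simp at h1
  · right
    apply periodize hmeas hper hval 1
    have hH0 := (lintegral_eq_zero_iff hHm).mp hN0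
    filter_upwards [hH0, ae_restrict_of_ae hval] with x h1 h2
    rcases h2 with h|h
    · rw [h] at h1
      simp at h1
    · exact h
end

section
/- Let S ⊆ [-1/2,1/2) be measurable with 0 < |S| < 1 (Lebesgue measure), and let g be the 1-periodic extension of the indicator function of S to ℝ. Then ∫_{-1/2}^{1/2} ∫_{-1/2}^{1/2} |g(x+y)-g(x)|²/|y|² dx dy = ∞. -/
open MeasureTheory Set
open scoped ENNReal

lemma shiftL (φ : ℝ → ℝ≥0∞) (c : ℝ) (B : Set ℝ) :
    ∫⁻ x in (fun x => x + c) ⁻¹' B, φ (x + c) = ∫⁻ x in B, φ x :=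
  (measurePreserving_add_right volume c).setLIntegral_comp_preimage_emb
    (measurableEmbedding_addRight c) φ B

lemma perInt {φ : ℝ → ℝ≥0∞} (hper : ∀ x, φ (x + 1) = φ x) (n : ℤ) (x : ℝ) :
    φ (x + n) = φ x := by
  induction n using Int.induction_on with
  | zero => simp
  | succ k ih =>
      have e : (((k:ℤ)+1 : ℤ):ℝ) = ((k:ℤ):ℝ) + 1 := by push_cast; ring
      rw [e, ← add_assoc, hper]
      exact ih
  | pred k ih =>
      have h2 : x + (-(k:ℝ) - 1) + 1 = x + -(k:ℝ) := by ring
      have h3 : φ (x + (-(k:ℝ) - 1)) = φ (x + -(k:ℝ)) := by rw [← h2, hper]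
      have e1 : ((-(k:ℤ) - 1 : ℤ) : ℝ) = -(k:ℝ) - 1 := by push_cast; ring
      have e2 : ((-(k:ℤ) : ℤ) : ℝ) = -(k:ℝ) := by push_cast; ring
      rw [e1, h3, ← e2, ih]

lemma dIco (u v w : ℝ) : Disjoint (Ico u v) (Ico v w) := by
  rw [Set.Ico_disjoint_Ico]
  exact (min_le_left _ _).trans (le_max_right _ _)

lemma lint_periodic {φ : ℝ → ℝ≥0∞} (hper : ∀ x, φ (x + 1) = φ x) (a : ℝ) :
    ∫⁻ x in Ico a (a+1), φ x = ∫⁻ x in Ico (0:ℝ) 1, φ x := by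
  have han : a ≤ (⌈a⌉:ℝ) := Int.le_ceil a
  have hna : ((⌈a⌉:ℤ):ℝ) < a + 1 := by exact_mod_cast Int.ceil_lt_add_one a
  set b : ℝ := (⌈a⌉:ℝ) with hb
  set r : ℝ := a + 1 - b with hr
  have h1 : ∫⁻ x in Ico b (a+1), φ x = ∫⁻ x in Ico (0:ℝ) r, φ x := by
    have hpre : (fun x => x + b) ⁻¹' Ico b (a+1) = Ico (0:ℝ) r := by
      ext x
      simp only [Set.mem_preimage, Set.mem_Ico, hr]
      constructor <;> rintro ⟨p, q⟩ <;> constructor <;> linarith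
    have := shiftL φ b (Ico b (a+1))
    rw [hpre] at this
    rw [← this]
    refine setLIntegral_congr_fun measurableSet_Ico (fun x _ => ?_)
    exact perInt hper ⌈a⌉ x
  have h2 : ∫⁻ x in Ico a b, φ x = ∫⁻ x in Ico r 1, φ x := by
    have hpre : (fun x => x + (b-1)) ⁻¹' Ico a b = Ico r 1 := by
      ext x
      simp only [Set.mem_preimage, Set.mem_Ico, hr]
      constructor <;> rintro ⟨p, q⟩ <;> constructor <;> linarith
    have := shiftL φ (b-1) (Ico a b)
    rw [hpre] at this
    rw [← this]
    refine setLIntegral_congr_fun measurableSet_Ico (fun x _ => ?_)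
    have e : x + (b - 1) = x + ((⌈a⌉ - 1 : ℤ):ℝ) := by push_cast [hb]; ring
    rw [e, perInt hper]
  have key1 : (0:ℝ) ≤ r := by rw [hr]; linarith
  have key2 : r ≤ 1 := by rw [hr]; linarith
  rw [← Set.Ico_union_Ico_eq_Ico han hna.le,
    lintegral_union measurableSet_Ico (dIco a b (a+1)), h1, h2,
    ← Set.Ico_union_Ico_eq_Ico key1 key2,
    lintegral_union measurableSet_Ico (dIco 0 r 1), add_comm]

lemma lint_inv_top {b : ℝ} (hb : 0 < b) :
    ∫⁻ y in Ioo (0:ℝ) b, ENNReal.ofReal (1/y) = ⊤ := by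
  by_contra h
  have hfin : ∫⁻ y in Ioo (0:ℝ) b, ENNReal.ofReal (1/y) < ⊤ := lt_top_iff_ne_top.mpr h
  have hint : IntegrableOn (fun y : ℝ => y ^ (-1:ℝ)) (Ioo (0:ℝ) b) := by
    constructor
    · exact (measurable_id.pow_const _).aestronglyMeasurable
    · rw [hasFiniteIntegral_iff_ofReal]
      · refine lt_of_le_of_lt (le_of_eq ?_) hfin
        refine setLIntegral_congr_fun measurableSet_Ioo
          (fun y hy => ?_)
        rw [Real.rpow_neg_one, one_div]
      · filter_upwards [ae_restrict_mem measurableSet_Ioo] with y hy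
        exact Real.rpow_nonneg hy.1.le _
  have := (intervalIntegral.integrableOn_Ioo_rpow_iff hb).mp hint
  linarith

lemma volIc {A Iset : Set ℝ} (hA : MeasurableSet A) (k : ℝ≥0∞) :
    ∫⁻ x in Iset, A.indicator (fun _ => k) x = k * volume (A ∩ Iset) := by
  rw [lintegral_indicator hA, setLIntegral_const, Measure.restrict_apply hA]

lemma transJ {B : Set ℝ} (hB : MeasurableSet B) (hper : ∀ x, x + 1 ∈ B ↔ x ∈ B) (z : ℝ) :
    volume ({x | x + z ∈ B} ∩ Ico (-(1:ℝ)/2) (1/2)) = volume (B ∩ Ico (-(1:ℝ)/2) (1/2)) := by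
  have hperφ : ∀ x, (B.indicator (fun _ => (1:ℝ≥0∞))) (x+1) = B.indicator (fun _ => (1:ℝ≥0∞)) x := by
    intro x
    by_cases h : x ∈ B
    · rw [Set.indicator_of_mem h, Set.indicator_of_mem ((hper x).mpr h)]
    · rw [Set.indicator_of_notMem h, Set.indicator_of_notMem (fun hc => h ((hper x).mp hc))]
  have hmeas : MeasurableSet ((fun x : ℝ => x + z) ⁻¹' B) := (measurable_add_const z) hB
  have hset : {x : ℝ | x + z ∈ B} = (fun x : ℝ => x + z) ⁻¹' B := rfl
  rw [hset, ← one_mul (volume _), ← volIc hmeas (1:ℝ≥0∞)]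
  have h1 : ∀ x:ℝ, ((fun x : ℝ => x + z) ⁻¹' B).indicator (fun _ => (1:ℝ≥0∞)) x
      = B.indicator (fun _ => (1:ℝ≥0∞)) (x + z) := by
    intro x; by_cases h : x + z ∈ B <;> simp [Set.indicator_apply, Set.mem_preimage, h]
  have hIpre : Ico (-(1:ℝ)/2) (1/2) = (fun x : ℝ => x + z) ⁻¹' Ico (z + -(1:ℝ)/2) (z + 1/2) := by
    ext x
    simp only [Set.mem_preimage, Set.mem_Ico]
    constructor <;> intro h <;> exact ⟨by linarith [h.1], by linarith [h.2]⟩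
  have e1 : Ico (z + -(1:ℝ)/2) (z + 1/2) = Ico (z + -(1:ℝ)/2) ((z + -(1:ℝ)/2) + 1) := by
    rw [show z + (1:ℝ)/2 = (z + -(1:ℝ)/2) + 1 by ring]
  have e2 : Ico (-(1:ℝ)/2) (1/2) = Ico (-(1:ℝ)/2) (-(1:ℝ)/2 + 1) := by
    rw [show (1:ℝ)/2 = -(1:ℝ)/2 + 1 by ring]
  calc ∫⁻ x in Ico (-(1:ℝ)/2) (1/2), ((fun x : ℝ => x + z) ⁻¹' B).indicator (fun _ => (1:ℝ≥0∞)) x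
      = ∫⁻ x in Ico (-(1:ℝ)/2) (1/2), B.indicator (fun _ => (1:ℝ≥0∞)) (x + z) :=
        lintegral_congr fun x => h1 x
    _ = ∫⁻ x in (fun x : ℝ => x + z) ⁻¹' Ico (z + -(1:ℝ)/2) (z + 1/2),
          B.indicator (fun _ => (1:ℝ≥0∞)) (x + z) := by rw [← hIpre]
    _ = ∫⁻ x in Ico (z + -(1:ℝ)/2) (z + 1/2), B.indicator (fun _ => (1:ℝ≥0∞)) x :=
        shiftL (B.indicator fun _ => (1:ℝ≥0∞)) z _
    _ = ∫⁻ x in Ico (0:ℝ) 1, B.indicator (fun _ => (1:ℝ≥0∞)) x := by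
        rw [e1]; exact lint_periodic hperφ _
    _ = ∫⁻ x in Ico (-(1:ℝ)/2) (1/2), B.indicator (fun _ => (1:ℝ≥0∞)) x := by
        rw [e2]; exact (lint_periodic hperφ _).symm
    _ = 1 * volume (B ∩ Ico (-(1:ℝ)/2) (1/2)) := volIc hB 1
    _ = volume (B ∩ Ico (-(1:ℝ)/2) (1/2)) := one_mul _

set_option maxHeartbeats 1000000 in
/-- For `S ⊆ [-1/2,1/2)` with `0 < |S| < 1`, the 1-periodic extension `g` of the indicator
of `S` has infinite `H^{1/2}` Gagliardo seminorm over the fundamental domain. -/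
theorem stmt1 (S : Set ℝ) (hS : MeasurableSet S) (hsub : S ⊆ Set.Ico (-(1:ℝ)/2) (1/2))
    (h0 : 0 < volume S) (h1 : volume S < 1)
    (g : ℝ → ℝ)
    (hg : ∀ x : ℝ, g x = S.indicator 1 (Int.fract (x + 1/2) - 1/2)) :
    (∫⁻ x in Set.Ico (-(1:ℝ)/2) (1/2), ∫⁻ y in Set.Ico (-(1:ℝ)/2) (1/2),
      ENNReal.ofReal (|g (x + y) - g x| ^ 2 / |y| ^ 2)) = ⊤ := by
  classical
  set I : Set ℝ := Set.Ico (-(1:ℝ)/2) (1/2) with hIdef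
  set T : Set ℝ := (fun x => Int.fract (x + 1/2) - 1/2) ⁻¹' S with hTdef
  have hwm : Measurable fun x : ℝ => Int.fract (x + 1/2) - 1/2 :=
    ((measurable_id.add_const _).fract).sub_const _
  have hTm : MeasurableSet T := hwm hS
  have hgval : ∀ x, g x = if x ∈ T then (1:ℝ) else 0 := by
    intro x; rw [hg x]
    simp [hTdef, Set.indicator_apply, Set.mem_preimage]
  have hgm : Measurable g := by
    have : g = fun x => if x ∈ T then (1:ℝ) else 0 := funext hgval
    rw [this]
    exact Measurable.ite hTm measurable_const measurable_const
  have hTper : ∀ x : ℝ, x + 1 ∈ T ↔ x ∈ T := by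
    intro x
    simp only [hTdef, Set.mem_preimage]
    have e : x + 1 + 1/2 = (x + 1/2) + ((1:ℤ):ℝ) := by push_cast; ring
    rw [e, Int.fract_add_intCast]
  have hTI : T ∩ I = S := by
    ext x
    simp only [hTdef, hIdef, Set.mem_inter_iff, Set.mem_preimage, Set.mem_Ico]
    constructor
    · rintro ⟨hx1, hx2, hx3⟩
      have hf : Int.fract (x + 1/2) = x + 1/2 :=
        Int.fract_eq_self.mpr ⟨by linarith, by linarith⟩
      rw [hf] at hx1
      simpa using hx1
    · intro hx
      have hxI := hsub hx
      simp only [hIdef, Set.mem_Ico] at hxI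
      have hf : Int.fract (x + 1/2) = x + 1/2 :=
        Int.fract_eq_self.mpr ⟨by linarith [hxI.1], by linarith [hxI.2]⟩
      refine ⟨by rw [hf]; simpa using hx, hxI.1, hxI.2⟩
  have hvolI : volume I = 1 := by
    rw [hIdef, Real.volume_Ico]
    norm_num
  -- the symmetric difference sets
  set D : ℝ → Set ℝ := fun y =>
    (((fun x => x + y) ⁻¹' T) \ T) ∪ (T \ ((fun x => x + y) ⁻¹' T)) with hDdef
  have hDm : ∀ y, MeasurableSet (D y) := fun y =>
    (((measurable_add_const y) hTm).diff hTm).union (hTm.diff ((measurable_add_const y) hTm))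
  have hDmem : ∀ y x, x ∈ D y ↔ ¬(x + y ∈ T ↔ x ∈ T) := by
    intro y x
    simp only [hDdef, Set.mem_union, Set.mem_diff, Set.mem_preimage]
    tauto
  have hDper : ∀ y x, x + 1 ∈ D y ↔ x ∈ D y := by
    intro y x
    rw [hDmem, hDmem]
    have e : x + 1 + y = (x + y) + 1 := by ring
    rw [e]
    have h1 := hTper (x + y)
    have h2 := hTper x
    tauto
  set f : ℝ → ℝ≥0∞ := fun y => volume (D y ∩ I) with hfdef
  have transJ' : ∀ {B : Set ℝ}, MeasurableSet B → (∀ x, x + 1 ∈ B ↔ x ∈ B) → ∀ z : ℝ,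
      volume ({x | x + z ∈ B} ∩ I) = volume (B ∩ I) := by
    intro B hB hp z
    rw [hIdef]
    exact transJ hB hp z
  have hsubadd : ∀ u v : ℝ, f (u + v) ≤ f u + f v := by
    intro u v
    have hincl : D (u + v) ∩ I ⊆ (D v ∩ I) ∪ ({x | x + v ∈ D u} ∩ I) := by
      rintro x ⟨hx, hxI⟩
      by_cases hv : x ∈ D v
      · exact Or.inl ⟨hv, hxI⟩
      · refine Or.inr ⟨?_, hxI⟩
        have hd1 := (hDmem (u+v) x).mp hx
        have hd2 : (x + v ∈ T ↔ x ∈ T) := not_not.mp fun h => hv ((hDmem v x).mpr h)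
        show x + v ∈ D u
        rw [hDmem]
        have e : x + v + u = x + (u + v) := by ring
        rw [e]
        tauto
    have hD' : volume ({x | x + v ∈ D u} ∩ I) = f u := transJ' (hDm u) (hDper u) v
    calc f (u+v) ≤ volume ((D v ∩ I) ∪ ({x | x + v ∈ D u} ∩ I)) := measure_mono hincl
      _ ≤ volume (D v ∩ I) + volume ({x | x + v ∈ D u} ∩ I) := measure_union_le _ _
      _ = f u + f v := by rw [hD']; exact add_comm _ _
  have hfper : ∀ t, f (t + 1) = f t := by
    intro t
    have hDe : D (t + 1) = D t := by
      ext x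
      rw [hDmem, hDmem]
      have e : x + (t + 1) = (x + t) + 1 := by ring
      rw [e]
      have := hTper (x + t)
      tauto
    simp only [hfdef, hDe]
  have hFm : Measurable (Function.uncurry fun x y : ℝ =>
      ENNReal.ofReal (|g (x + y) - g x| ^ 2 / |y| ^ 2)) := by
    apply ENNReal.measurable_ofReal.comp
    exact Measurable.div
      ((((hgm.comp (measurable_fst.add measurable_snd)).sub
        (hgm.comp measurable_fst)).abs).pow_const 2)
      ((measurable_snd.abs).pow_const 2)
  have hF : ∀ x y : ℝ, ENNReal.ofReal (|g (x + y) - g x| ^ 2 / |y| ^ 2)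
      = (D y).indicator (fun _ => ENNReal.ofReal (1 / y^2)) x := by
    intro x y
    by_cases hx : x ∈ D y
    · rw [Set.indicator_of_mem hx]
      have hd1 := (hDmem y x).mp hx
      have habs : |g (x + y) - g x| = 1 := by
        rw [hgval, hgval]
        by_cases h2 : x ∈ T <;> by_cases h3 : x + y ∈ T <;>
          simp [h2, h3] at hd1 ⊢
      rw [habs, one_pow, sq_abs]
    · rw [Set.indicator_of_notMem hx]
      have hd1 : (x + y ∈ T ↔ x ∈ T) := not_not.mp fun h => hx ((hDmem y x).mpr h)
      have hge : g (x + y) = g x := by rw [hgval, hgval]; exact if_congr hd1 rfl rfl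
      rw [hge, sub_self, abs_zero]
      norm_num
  set M : ℝ≥0∞ := ∫⁻ y in I, ENNReal.ofReal (1 / y^2) * f y with hMdef
  have hswap1 : (∫⁻ x in I, ∫⁻ y in I,
      ENNReal.ofReal (|g (x + y) - g x| ^ 2 / |y| ^ 2)) = M := by
    rw [lintegral_lintegral_swap hFm.aemeasurable, hMdef]
    refine lintegral_congr fun y => ?_
    rw [lintegral_congr fun x => hF x y, volIc (hDm y)]
  -- mean value lower bound
  have hTcper : ∀ x : ℝ, x + 1 ∈ Tᶜ ↔ x ∈ Tᶜ := fun x => not_iff_not.mpr (hTper x)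
  have hvolT : volume (T ∩ I) = volume S := by rw [hTI]
  have hvolTc : volume (Tᶜ ∩ I) = 1 - volume S := by
    have he : Tᶜ ∩ I = I \ S := by
      rw [← hTI]
      ext x
      simp only [Set.mem_inter_iff, Set.mem_compl_iff, Set.mem_diff]
      tauto
    rw [he, measure_diff hsub hS.nullMeasurableSet h1.ne_top, hvolI]
  set c : ℝ≥0∞ := min (volume S) (1 - volume S) with hcdef
  have hc0 : c ≠ 0 := (lt_min h0 (tsub_pos_iff_lt.mpr h1)).ne'
  have hcT : c ≠ ⊤ := ((min_le_left _ _).trans_lt h1).ne_top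
  have hinner : ∀ x : ℝ, c ≤ ∫⁻ y in I, (D y).indicator (fun _ => (1:ℝ≥0∞)) x := by
    intro x
    have hpt : ∀ y : ℝ, (D y).indicator (fun _ => (1:ℝ≥0∞)) x
        = ({y : ℝ | x ∈ D y}).indicator (fun _ => (1:ℝ≥0∞)) y := by
      intro y
      by_cases h : x ∈ D y
      · rw [Set.indicator_of_mem h, Set.indicator_of_mem (by exact h)]
      · rw [Set.indicator_of_notMem h, Set.indicator_of_notMem (by exact h)]
    rw [lintegral_congr fun y => hpt y]
    by_cases hx : x ∈ T
    · have hE : {y : ℝ | x ∈ D y} = {y : ℝ | y + x ∈ Tᶜ} := by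
        ext y
        rw [Set.mem_setOf_eq, Set.mem_setOf_eq, hDmem y x, add_comm x y, Set.mem_compl_iff]
        tauto
      have hEm : MeasurableSet {y : ℝ | y + x ∈ Tᶜ} := (measurable_add_const x) hTm.compl
      rw [hE, volIc hEm, one_mul, transJ' hTm.compl hTcper x, hvolTc]
      exact min_le_right _ _
    · have hE : {y : ℝ | x ∈ D y} = {y : ℝ | y + x ∈ T} := by
        ext y
        rw [Set.mem_setOf_eq, Set.mem_setOf_eq, hDmem y x, add_comm x y]
        tauto
      have hEm : MeasurableSet {y : ℝ | y + x ∈ T} := (measurable_add_const x) hTm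
      rw [hE, volIc hEm, one_mul, transJ' hTm hTper x, hvolT]
      exact min_le_left _ _
  have hGm : Measurable (Function.uncurry
      fun y x : ℝ => (D y).indicator (fun _ => (1:ℝ≥0∞)) x) := by
    have hA : MeasurableSet {p : ℝ × ℝ | p.2 ∈ D p.1} := by
      have he : {p : ℝ × ℝ | p.2 ∈ D p.1}
          = (((fun p : ℝ × ℝ => p.2 + p.1) ⁻¹' T) \ ((fun p : ℝ × ℝ => p.2) ⁻¹' T))
            ∪ (((fun p : ℝ × ℝ => p.2) ⁻¹' T) \ ((fun p : ℝ × ℝ => p.2 + p.1) ⁻¹' T)) := by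
        ext p
        simp only [Set.mem_setOf_eq, hDdef, Set.mem_union, Set.mem_diff, Set.mem_preimage]
      rw [he]
      exact (((measurable_snd.add measurable_fst) hTm).diff (measurable_snd hTm)).union
        ((measurable_snd hTm).diff ((measurable_snd.add measurable_fst) hTm))
    have he2 : (Function.uncurry fun y x : ℝ => (D y).indicator (fun _ => (1:ℝ≥0∞)) x)
        = ({p : ℝ × ℝ | p.2 ∈ D p.1}).indicator (fun _ => (1:ℝ≥0∞)) := by
      funext p
      simp only [Function.uncurry, Set.indicator_apply, Set.mem_setOf_eq]
    rw [he2]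
    exact measurable_const.indicator hA
  have hmean : c ≤ ∫⁻ t in I, f t := by
    have h1' : (∫⁻ t in I, f t)
        = ∫⁻ y in I, ∫⁻ x in I, (D y).indicator (fun _ => (1:ℝ≥0∞)) x := by
      refine lintegral_congr fun y => ?_
      rw [volIc (hDm y), one_mul]
    rw [h1', lintegral_lintegral_swap hGm.aemeasurable]
    calc c = c * volume I := by rw [hvolI, mul_one]
      _ = ∫⁻ _ in I, c := (setLIntegral_const _ _).symm
      _ ≤ ∫⁻ x in I, ∫⁻ y in I, (D y).indicator (fun _ => (1:ℝ≥0∞)) x :=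
          lintegral_mono fun x => hinner x
  have hmean01 : c ≤ ∫⁻ t in Ico (0:ℝ) 1, f t := by
    refine hmean.trans (le_of_eq ?_)
    rw [hIdef, show Ico (-(1:ℝ)/2) (1/2) = Ico (-(1:ℝ)/2) (-(1:ℝ)/2 + 1) by
      rw [show (1:ℝ)/2 = -(1:ℝ)/2 + 1 by ring]]
    exact lint_periodic hfper _
  by_contra hcon
  have hM : M ≠ ⊤ := fun h => hcon (hswap1.trans h)
  have hMr0 : (0:ℝ) ≤ M.toReal := ENNReal.toReal_nonneg
  set Mr := M.toReal with hMrdef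
  set cr := c.toReal with hcrdef
  have hcr0 : 0 < cr := ENNReal.toReal_pos hc0 hcT
  set y1 : ℝ := min (1/4) (cr/(8*(Mr+1))) with hy1def
  have hy10 : 0 < y1 := lt_min (by norm_num) (by positivity)
  have fq : ∀ (q : ℕ) (s y : ℝ), f (s + (q:ℝ)*y) ≤ f s + (q:ℝ≥0∞) * f y := by
    intro q
    induction q with
    | zero => intro s y; simp
    | succ q ih =>
        intro s y
        have e : s + ((q+1:ℕ):ℝ)*y = (s + (q:ℕ)*y) + y := by push_cast; ring
        calc f (s + ((q+1:ℕ):ℝ)*y) = f ((s + ((q:ℕ):ℝ)*y) + y) := by rw [e]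
          _ ≤ f (s + ((q:ℕ):ℝ)*y) + f y := hsubadd _ _
          _ ≤ (f s + ((q:ℕ):ℝ≥0∞) * f y) + f y := add_le_add_left (ih s y) _
          _ = f s + ((q+1:ℕ):ℝ≥0∞) * f y := by push_cast; ring
  have key : ∀ y : ℝ, 0 < y → y ≤ 1/4 →
      c ≤ ENNReal.ofReal (2*y) * M + ENNReal.ofReal (4/y) * f y := by
    intro y hy0 hy4
    have hyne : y ≠ 0 := hy0.ne'
    set N : ℕ := ⌈1/y⌉₊ with hNdef
    have hNy : (1:ℝ)/y ≤ N := Nat.le_ceil _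
    have hcover : Ico (0:ℝ) 1 ⊆ ⋃ q : Fin N, Ico (((q:ℕ):ℝ)*y) ((((q:ℕ):ℝ)+1)*y) := by
      intro t ht
      rcases ht with ⟨ht0, ht1⟩
      have hq1 : ((⌊t/y⌋₊:ℝ)) ≤ t/y := Nat.floor_le (div_nonneg ht0 hy0.le)
      have hq2 : t/y < (⌊t/y⌋₊:ℝ) + 1 := Nat.lt_floor_add_one _
      have hqN : ⌊t/y⌋₊ < N := by
        have h3 : t/y < 1/y := by gcongr
        have h4 : ((⌊t/y⌋₊:ℝ)) < (N:ℝ) := lt_of_le_of_lt hq1 (h3.trans_le hNy)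
        exact_mod_cast h4
      refine Set.mem_iUnion.mpr ⟨⟨⌊t/y⌋₊, hqN⟩, ?_⟩
      refine Set.mem_Ico.mpr ⟨?_, ?_⟩
      · exact (le_div_iff₀ hy0).mp hq1
      · exact (div_lt_iff₀ hy0).mp hq2
    set tail : ℝ≥0∞ := ∫⁻ t in Ico (0:ℝ) y, f t with htaildef
    have hterm : ∀ q : Fin N, (∫⁻ t in Ico (((q:ℕ):ℝ)*y) ((((q:ℕ):ℝ)+1)*y), f t)
        ≤ tail + (N:ℝ≥0∞) * f y * ENNReal.ofReal y := by
      intro q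
      have hpre : (fun x => x + ((q:ℕ):ℝ)*y) ⁻¹' Ico (((q:ℕ):ℝ)*y) ((((q:ℕ):ℝ)+1)*y)
          = Ico (0:ℝ) y := by
        ext x
        simp only [Set.mem_preimage, Set.mem_Ico]
        constructor <;> rintro ⟨p1, p2⟩ <;> constructor <;> nlinarith
      have hs := shiftL f (((q:ℕ):ℝ)*y) (Ico (((q:ℕ):ℝ)*y) ((((q:ℕ):ℝ)+1)*y))
      rw [hpre] at hs
      rw [← hs]
      calc (∫⁻ s in Ico (0:ℝ) y, f (s + ((q:ℕ):ℝ)*y))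
          ≤ ∫⁻ s in Ico (0:ℝ) y, (f s + ((q:ℕ):ℝ≥0∞) * f y) :=
            lintegral_mono fun s => fq (q:ℕ) s y
        _ = tail + (((q:ℕ):ℝ≥0∞) * f y) * volume (Ico (0:ℝ) y) := by
            rw [lintegral_add_right _ measurable_const, setLIntegral_const]
        _ = tail + (((q:ℕ):ℝ≥0∞) * f y) * ENNReal.ofReal y := by
            rw [Real.volume_Ico, sub_zero]
        _ ≤ tail + ((N:ℝ≥0∞) * f y) * ENNReal.ofReal y := by
            gcongr
            exact_mod_cast (q.2).le
        _ = tail + (N:ℝ≥0∞) * f y * ENNReal.ofReal y := by ring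
    have hstep1 : c ≤ (N:ℝ≥0∞) * tail + (N:ℝ≥0∞) * (N:ℝ≥0∞) * f y * ENNReal.ofReal y := by
      refine hmean01.trans ?_
      calc (∫⁻ t in Ico (0:ℝ) 1, f t)
          ≤ ∫⁻ t in ⋃ q : Fin N, Ico (((q:ℕ):ℝ)*y) ((((q:ℕ):ℝ)+1)*y), f t :=
            lintegral_mono_set hcover
        _ ≤ ∑' q : Fin N, ∫⁻ t in Ico (((q:ℕ):ℝ)*y) ((((q:ℕ):ℝ)+1)*y), f t :=
            lintegral_iUnion_le _ _
        _ ≤ ∑' _q : Fin N, (tail + (N:ℝ≥0∞) * f y * ENNReal.ofReal y) :=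
            ENNReal.tsum_le_tsum fun q => hterm q
        _ = (N:ℝ≥0∞) * (tail + (N:ℝ≥0∞) * f y * ENNReal.ofReal y) := by
            rw [tsum_fintype, Finset.sum_const, Finset.card_univ, Fintype.card_fin,
              nsmul_eq_mul]
        _ = (N:ℝ≥0∞) * tail + (N:ℝ≥0∞) * (N:ℝ≥0∞) * f y * ENNReal.ofReal y := by ring
    have htail : tail ≤ ENNReal.ofReal (y^2) * M := by
      have hIoo : tail = ∫⁻ t in Ioo (0:ℝ) y, f t := by
        rw [htaildef, ← Measure.restrict_congr_set Ioo_ae_eq_Ico]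
      rw [hIoo]
      calc (∫⁻ t in Ioo (0:ℝ) y, f t)
          ≤ ∫⁻ t in Ioo (0:ℝ) y, ENNReal.ofReal (y^2) * (ENNReal.ofReal (1/t^2) * f t) := by
            refine lintegral_mono_ae ?_
            filter_upwards [ae_restrict_mem measurableSet_Ioo] with t ht
            have h1t : (1:ℝ≥0∞) ≤ ENNReal.ofReal (y^2) * ENNReal.ofReal (1/t^2) := by
              rw [← ENNReal.ofReal_mul (by positivity),
                show (1:ℝ≥0∞) = ENNReal.ofReal 1 by simp]
              apply ENNReal.ofReal_le_ofReal
              rw [mul_one_div, le_div_iff₀ (pow_pos ht.1 2), one_mul]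
              nlinarith [ht.1, ht.2]
            calc f t = 1 * f t := (one_mul _).symm
              _ ≤ (ENNReal.ofReal (y^2) * ENNReal.ofReal (1/t^2)) * f t :=
                  mul_le_mul_left h1t _
              _ = ENNReal.ofReal (y^2) * (ENNReal.ofReal (1/t^2) * f t) := mul_assoc _ _ _
        _ = ENNReal.ofReal (y^2) * ∫⁻ t in Ioo (0:ℝ) y, ENNReal.ofReal (1/t^2) * f t :=
            lintegral_const_mul' _ _ ENNReal.ofReal_ne_top
        _ ≤ ENNReal.ofReal (y^2) * M := by
            gcongr
            rw [hMdef]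
            refine lintegral_mono_set ?_
            rw [hIdef]
            intro t ht
            rcases ht with ⟨ht0, ht1⟩
            exact Set.mem_Ico.mpr ⟨by linarith, by linarith⟩
    have hN2 : (N:ℝ≥0∞) ≤ ENNReal.ofReal (2/y) := by
      have hNlt : (N:ℝ) < 1/y + 1 := by
        have := Nat.ceil_lt_add_one (by positivity : (0:ℝ) ≤ 1/y)
        exact_mod_cast this
      have h1y : (1:ℝ) ≤ 1/y := by rw [le_div_iff₀ hy0]; linarith
      have e : (2:ℝ)/y = 1/y + 1/y := by ring
      have h2 : (N:ℝ) ≤ 2/y := by rw [e]; linarith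
      rw [← ENNReal.ofReal_natCast]
      exact ENNReal.ofReal_le_ofReal h2
    have e1 : ENNReal.ofReal (2/y) * ENNReal.ofReal (y^2) = ENNReal.ofReal (2*y) := by
      rw [← ENNReal.ofReal_mul (by positivity)]
      congr 1
      field_simp
    have e2 : ENNReal.ofReal (2/y) * ENNReal.ofReal (2/y) * ENNReal.ofReal y
        = ENNReal.ofReal (4/y) := by
      rw [← ENNReal.ofReal_mul (by positivity), ← ENNReal.ofReal_mul (by positivity)]
      congr 1
      field_simp
      ring
    calc c ≤ (N:ℝ≥0∞) * tail + (N:ℝ≥0∞) * (N:ℝ≥0∞) * f y * ENNReal.ofReal y := hstep1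
      _ ≤ (N:ℝ≥0∞) * (ENNReal.ofReal (y^2) * M)
          + (N:ℝ≥0∞) * (N:ℝ≥0∞) * f y * ENNReal.ofReal y := by gcongr
      _ = ((N:ℝ≥0∞) * ENNReal.ofReal (y^2)) * M
          + ((N:ℝ≥0∞) * (N:ℝ≥0∞) * ENNReal.ofReal y) * f y := by ring
      _ ≤ (ENNReal.ofReal (2/y) * ENNReal.ofReal (y^2)) * M
          + (ENNReal.ofReal (2/y) * ENNReal.ofReal (2/y) * ENNReal.ofReal y) * f y := by
            gcongr
      _ = ENNReal.ofReal (2*y) * M + ENNReal.ofReal (4/y) * f y := by rw [e1, e2]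
  have hA : ∀ y : ℝ, 0 < y → y < y1 → ENNReal.ofReal (2*y) * M ≤ c/2 := by
    intro y hy0 hyy
    have hyb : y < cr/(8*(Mr+1)) := hyy.trans_le (min_le_right _ _)
    have hMeq : M = ENNReal.ofReal Mr := (ENNReal.ofReal_toReal hM).symm
    rw [hMeq, ← ENNReal.ofReal_mul (by positivity)]
    have h8 : y * (8*(Mr+1)) < cr := (lt_div_iff₀ (by positivity)).mp hyb
    have hb2 : 2*y*Mr ≤ cr/2 := by nlinarith
    calc ENNReal.ofReal (2*y*Mr) ≤ ENNReal.ofReal (cr/2) := ENNReal.ofReal_le_ofReal hb2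
      _ = c/2 := by
          rw [ENNReal.ofReal_div_of_pos (by norm_num), hcrdef, ENNReal.ofReal_toReal hcT]
          norm_num
  have hc2T : c/2 ≠ ⊤ := (ENNReal.div_lt_top hcT (by norm_num)).ne
  have hkey2 : ∀ y : ℝ, 0 < y → y < y1 → c/2 ≤ ENNReal.ofReal (4/y) * f y := by
    intro y hy0 hyy
    have h4 : y ≤ 1/4 := (hyy.trans_le (min_le_left _ _)).le
    have h5 := key y hy0 h4
    have h6 : c/2 + c/2 ≤ c/2 + ENNReal.ofReal (4/y) * f y := by
      rw [ENNReal.add_halves]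
      exact h5.trans (add_le_add_left (hA y hy0 hyy) _)
    exact (ENNReal.add_le_add_iff_left hc2T).mp h6
  have hlow : ∀ y : ℝ, 0 < y → y < y1 →
      (c/2) * ENNReal.ofReal (1/(4*y)) ≤ ENNReal.ofReal (1/y^2) * f y := by
    intro y hy0 hyy
    have hyne : y ≠ 0 := hy0.ne'
    have h7 := hkey2 y hy0 hyy
    have h8 : ENNReal.ofReal (y/4) * (c/2) ≤ f y := by
      calc ENNReal.ofReal (y/4) * (c/2)
          ≤ ENNReal.ofReal (y/4) * (ENNReal.ofReal (4/y) * f y) := mul_le_mul_right h7 _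
        _ = (ENNReal.ofReal (y/4) * ENNReal.ofReal (4/y)) * f y := (mul_assoc _ _ _).symm
        _ = f y := by
            rw [← ENNReal.ofReal_mul (by positivity),
              show y/4 * (4/y) = 1 by field_simp]
            simp
    calc (c/2) * ENNReal.ofReal (1/(4*y))
        = ENNReal.ofReal (1/y^2) * (ENNReal.ofReal (y/4) * (c/2)) := by
          symm
          rw [← mul_assoc, ← ENNReal.ofReal_mul (by positivity),
            show (1:ℝ)/y^2 * (y/4) = 1/(4*y) by field_simp]
          ring
      _ ≤ ENNReal.ofReal (1/y^2) * f y := mul_le_mul_right h8 _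
  have hsubI : Ioo (0:ℝ) y1 ⊆ I := by
    rw [hIdef]
    intro t ht
    rcases ht with ⟨ht0, ht1⟩
    have hb : y1 ≤ 1/4 := min_le_left _ _
    exact Set.mem_Ico.mpr ⟨by linarith, by linarith⟩
  have hbig : (⊤:ℝ≥0∞) ≤ M := by
    calc (⊤:ℝ≥0∞) = (c/2) * ∫⁻ y in Ioo (0:ℝ) y1, ENNReal.ofReal (1/(4*y)) := by
          have hpt : ∀ y : ℝ, ENNReal.ofReal (1/(4*y))
              = ENNReal.ofReal (1/4) * ENNReal.ofReal (1/y) := by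
            intro y
            rw [← ENNReal.ofReal_mul (by norm_num)]
            congr 1
            ring
          have hi : ∫⁻ y in Ioo (0:ℝ) y1, ENNReal.ofReal (1/(4*y)) = ⊤ := by
            rw [lintegral_congr fun y => hpt y,
              lintegral_const_mul' _ _ ENNReal.ofReal_ne_top,
              lint_inv_top hy10, ENNReal.mul_top]
            exact (ENNReal.ofReal_pos.mpr (by norm_num)).ne'
          rw [hi, ENNReal.mul_top]
          simp only [ne_eq, ENNReal.div_eq_zero_iff, not_or]
          exact ⟨hc0, by norm_num⟩
      _ = ∫⁻ y in Ioo (0:ℝ) y1, (c/2) * ENNReal.ofReal (1/(4*y)) :=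
          (lintegral_const_mul' _ _ hc2T).symm
      _ ≤ ∫⁻ y in Ioo (0:ℝ) y1, ENNReal.ofReal (1/y^2) * f y := by
          refine lintegral_mono_ae ?_
          filter_upwards [ae_restrict_mem measurableSet_Ioo] with y hy
          exact hlow y hy.1 hy.2
      _ ≤ M := by
          rw [hMdef]
          exact lintegral_mono_set hsubI
  exact hM (top_le_iff.mp hbig)
end

section
/- Let g be a 1-periodic measurable function on ℝ such that the limit lim_{|I|→0} (1/|I|²) ∫_I ∫_I |g(x)-g(y)| dx dy = 0 holds uniformly over intervals I ⊆ [-1/2,1/2). If g takes values in {0,1} almost everywhere, then g = 0 a.e. or g = 1 a.e. on [-1/2,1/2). -/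
open MeasureTheory intervalIntegral Set Filter Metric Topology ENNReal NNReal

lemma myBound {g : ℝ → ℝ} (hval : ∀ᵐ x : ℝ, g x = 0 ∨ g x = 1) :
    ∀ᵐ x : ℝ, ‖g x‖ ≤ 1 := by
  filter_upwards [hval] with x hx
  rcases hx with h | h <;> rw [h] <;> norm_num

lemma myInt {g : ℝ → ℝ} (hmeas : Measurable g) (hval : ∀ᵐ x : ℝ, g x = 0 ∨ g x = 1)
    (a b : ℝ) : IntervalIntegrable g volume a b := by
  have h : ∀ c d : ℝ, IntegrableOn g (Set.Ioc c d) volume := fun c d =>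
    (integrableOn_const (μ := volume) (s := Set.Ioc c d) (C := (1:ℝ)) measure_Ioc_lt_top.ne enorm_ne_top).mono' hmeas.aestronglyMeasurable
      (ae_restrict_of_ae (myBound hval))
  exact ⟨h a b, h b a⟩

lemma myDbl {g : ℝ → ℝ} (hmeas : Measurable g) (hval : ∀ᵐ x : ℝ, g x = 0 ∨ g x = 1)
    (a b : ℝ) :
    ∫ x in a..b, ∫ y in a..b, |g x - g y| =
      2 * (∫ x in a..b, g x) * (b - a) - 2 * (∫ x in a..b, g x) ^ 2 := by
  have hInt := myInt hmeas hval
  set m := ∫ x in a..b, g x with hm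
  have stepA : ∀ x : ℝ, g x = 0 ∨ g x = 1 →
      ∫ y in a..b, |g x - g y| = ((b - a) - 2 * m) * g x + m := by
    intro x hx
    have h1 : ∫ y in a..b, |g x - g y| = ∫ y in a..b, (g x + (1 - 2 * g x) * g y) := by
      apply intervalIntegral.integral_congr_ae
      filter_upwards [hval] with y hy _
      rcases hx with h | h <;> rcases hy with h' | h' <;> rw [h, h'] <;> norm_num
    rw [h1, intervalIntegral.integral_add (intervalIntegrable_const) ((hInt a b).const_mul _),
      intervalIntegral.integral_const, intervalIntegral.integral_const_mul]
    simp only [smul_eq_mul, ← hm]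
    ring
  have h2 : ∫ x in a..b, ∫ y in a..b, |g x - g y|
      = ∫ x in a..b, (((b - a) - 2 * m) * g x + m) := by
    apply intervalIntegral.integral_congr_ae
    filter_upwards [hval] with x hx _
    exact stepA x hx
  rw [h2, intervalIntegral.integral_add (((hInt a b)).const_mul _) (intervalIntegrable_const),
    intervalIntegral.integral_const_mul, intervalIntegral.integral_const]
  simp only [smul_eq_mul, ← hm]
  ring

lemma myMeas {g : ℝ → ℝ} (hmeas : Measurable g) (hval : ∀ᵐ x : ℝ, g x = 0 ∨ g x = 1)
    {a b : ℝ} (hab : a ≤ b) :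
    ∫ x in a..b, g x = (volume ({x : ℝ | g x = 1} ∩ Set.Ioc a b)).toReal := by
  have hT : MeasurableSet {x : ℝ | g x = 1} := hmeas (measurableSet_singleton 1)
  rw [intervalIntegral.integral_of_le hab]
  have h1 : ∫ x in Set.Ioc a b, g x =
      ∫ x in Set.Ioc a b, Set.indicator {x : ℝ | g x = 1} (fun _ => (1:ℝ)) x := by
    apply setIntegral_congr_ae measurableSet_Ioc
    filter_upwards [hval] with x hx _
    rcases hx with h | h
    · rw [h, Set.indicator_apply]
      simp only [Set.mem_setOf_eq, h]
      norm_num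
    · rw [h, Set.indicator_apply]
      simp [Set.mem_setOf_eq, h]
  rw [h1, setIntegral_indicator hT, setIntegral_const, Set.inter_comm]
  simp
  rfl

lemma mySide {x r : ℝ} (hr : 0 < r) (hr4 : r < 1/4) (hx : x ∈ Set.Ico (-(1:ℝ)/2) (1/2)) :
    ∃ a : ℝ, -(1:ℝ)/2 ≤ a ∧ a + r < 1/2 ∧ Set.Ioc a (a + r) ⊆ Metric.closedBall x r := by
  rcases hx with ⟨hx1, hx2⟩
  rw [Real.closedBall_eq_Icc]
  by_cases h : x + r < 1/2
  · exact ⟨x, by linarith, by linarith, fun y hy => ⟨by rcases hy with ⟨h1,h2⟩; linarith,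
      by rcases hy with ⟨h1,h2⟩; linarith⟩⟩
  · refine ⟨x - r, by push_neg at h; linarith, by linarith, fun y hy => ?_⟩
    rcases hy with ⟨h1, h2⟩
    exact ⟨by linarith, by linarith⟩

lemma myDense {s : Set ℝ} {x r a : ℝ} (hr : 0 < r)
    (hsub : Set.Ioc a (a + r) ⊆ Metric.closedBall x r)
    (hd : ENNReal.ofReal (7/8) * volume (Metric.closedBall x r) < volume (s ∩ Metric.closedBall x r)) :
    ENNReal.ofReal (3 * r / 4) ≤ volume (s ∩ Set.Ioc a (a + r)) := by
  have hball : volume (Metric.closedBall x r) = ENNReal.ofReal (2 * r) := by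
    rw [Real.volume_closedBall]
  have hdiff : volume (Metric.closedBall x r \ Set.Ioc a (a + r)) = ENNReal.ofReal r := by
    rw [measure_diff hsub measurableSet_Ioc.nullMeasurableSet
        (by rw [Real.volume_Ioc]; exact ENNReal.ofReal_ne_top),
      hball, Real.volume_Ioc]
    rw [← ENNReal.ofReal_sub _ (by linarith)]
    congr 1; ring
  have hsplit : volume (s ∩ Metric.closedBall x r) ≤
      volume (s ∩ Set.Ioc a (a + r)) + ENNReal.ofReal r := by
    rw [← hdiff]
    refine le_trans (measure_mono ?_) (measure_union_le _ _)
    intro y hy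
    by_cases h : y ∈ Set.Ioc a (a + r)
    · exact Or.inl ⟨hy.1, h⟩
    · exact Or.inr ⟨hy.2, h⟩
  have h74 : ENNReal.ofReal (7 * r / 4) ≤ volume (s ∩ Set.Ioc a (a + r)) + ENNReal.ofReal r := by
    refine le_trans ?_ hsplit
    rw [hball] at hd
    calc ENNReal.ofReal (7 * r / 4) = ENNReal.ofReal (7/8) * ENNReal.ofReal (2 * r) := by
          rw [← ENNReal.ofReal_mul (by norm_num)]
          congr 1; ring
        _ ≤ _ := hd.le
  rw [← tsub_le_iff_right] at h74
  refine le_trans (le_of_eq ?_) h74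
  rw [← ENNReal.ofReal_sub _ (by linarith)]
  congr 1; ring

/-- If `g` is 1-periodic, measurable, `{0,1}`-valued a.e., and satisfies the uniform
vanishing averaged-oscillation condition
`lim_{|I|→0} |I|⁻² ∫_I∫_I |g(x)-g(y)| dx dy = 0` over intervals `I ⊆ [-1/2,1/2)`,
then `g = 0` a.e. or `g = 1` a.e. on `[-1/2,1/2)`. -/
theorem stmt2 (g : ℝ → ℝ) (hmeas : Measurable g)
    (hper : ∀ x : ℝ, g (x + 1) = g x)
    (hval : ∀ᵐ x : ℝ, g x = 0 ∨ g x = 1)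
    (hosc : ∀ ε : ℝ, 0 < ε → ∃ δ : ℝ, 0 < δ ∧ ∀ a b : ℝ, a < b →
      Set.Icc a b ⊆ Set.Ico (-(1:ℝ)/2) (1/2) → b - a < δ →
      (1 / (b - a) ^ 2) * ∫ x in a..b, ∫ y in a..b, |g x - g y| ≤ ε) :
    (∀ᵐ x ∂(volume.restrict (Set.Ico (-(1:ℝ)/2) (1/2))), g x = 0) ∨
    (∀ᵐ x ∂(volume.restrict (Set.Ico (-(1:ℝ)/2) (1/2))), g x = 1) := by
  by_contra hcon
  push_neg at hcon
  obtain ⟨h0, h1⟩ := hcon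
  set T : Set ℝ := {x : ℝ | g x = 1} with hTdef
  have hT : MeasurableSet T := hmeas (measurableSet_singleton 1)
  set A : Set ℝ := T ∩ Set.Ico (-(1:ℝ)/2) (1/2) with hAdef
  set B : Set ℝ := Set.Ico (-(1:ℝ)/2) (1/2) \ T with hBdef
  have hAm : MeasurableSet A := hT.inter measurableSet_Ico
  have hBm : MeasurableSet B := measurableSet_Ico.diff hT
  have hA : volume A ≠ 0 := by
    intro hA0
    apply h0
    have hnA : ∀ᵐ x : ℝ, x ∉ A := measure_eq_zero_iff_ae_notMem.mp hA0
    filter_upwards [ae_restrict_of_ae hval, ae_restrict_of_ae hnA,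
      ae_restrict_mem measurableSet_Ico] with x hx hnx hxI
    rcases hx with h | h
    · exact not_not.mpr h
    · exact absurd ⟨h, hxI⟩ hnx
  have hB : volume B ≠ 0 := by
    intro hB0
    apply h1
    have hnB : ∀ᵐ x : ℝ, x ∉ B := measure_eq_zero_iff_ae_notMem.mp hB0
    filter_upwards [ae_restrict_of_ae hval, ae_restrict_of_ae hnB,
      ae_restrict_mem measurableSet_Ico] with x hx hnx hxI
    by_contra hne
    exact hnx ⟨hxI, hne⟩
  have hAne : (ae (volume.restrict A)).NeBot :=
    ae_neBot.2 (by rwa [Ne, Measure.restrict_eq_zero])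
  have hBne : (ae (volume.restrict B)).NeBot :=
    ae_neBot.2 (by rwa [Ne, Measure.restrict_eq_zero])
  obtain ⟨x0, hx0t, hx0A⟩ :=
    ((Besicovitch.ae_tendsto_measure_inter_div volume A).and (ae_restrict_mem hAm)).exists
  obtain ⟨x1, hx1t, hx1B⟩ :=
    ((Besicovitch.ae_tendsto_measure_inter_div volume B).and (ae_restrict_mem hBm)).exists
  obtain ⟨δ, hδ, hosc'⟩ := hosc (1/4) (by norm_num)
  have Emul : ∀ (s : Set ℝ) (x : ℝ),
      Tendsto (fun r => volume (s ∩ closedBall x r) / volume (closedBall x r)) (𝓝[>] 0) (𝓝 1) →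
      ∀ᶠ r in 𝓝[>] (0:ℝ),
        ENNReal.ofReal (7/8) * volume (closedBall x r) < volume (s ∩ closedBall x r) := by
    intro s x hx
    filter_upwards [hx.eventually_const_lt
      (show ENNReal.ofReal (7/8) < 1 from ENNReal.ofReal_lt_one.2 (by norm_num)),
      self_mem_nhdsWithin] with r hr hrpos
    have hb0 : volume (closedBall x r) ≠ 0 := by
      rw [Real.volume_closedBall]
      simp only [Ne, ENNReal.ofReal_eq_zero, not_le]
      exact by linarith [mem_Ioi.mp hrpos]
    have hbt : volume (closedBall x r) ≠ ⊤ := by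
      rw [Real.volume_closedBall]; exact ENNReal.ofReal_ne_top
    exact (ENNReal.lt_div_iff_mul_lt (Or.inl hb0) (Or.inl hbt)).mp hr
  have Emem : Set.Ioo (0:ℝ) (min δ (1/4)) ∈ nhdsWithin (0:ℝ) (Set.Ioi 0) :=
    Ioo_mem_nhdsGT_of_mem ⟨le_refl 0, lt_min hδ (by norm_num)⟩
  obtain ⟨r, ⟨hrA, hrB⟩, hrIoo⟩ :=
    (((Emul A x0 hx0t).and (Emul B x1 hx1t)).and Emem).exists
  obtain ⟨hr0, hrlt⟩ := hrIoo
  have hrδ : r < δ := lt_of_lt_of_le hrlt (min_le_left _ _)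
  have hr4 : r < 1/4 := lt_of_lt_of_le hrlt (min_le_right _ _)
  -- choose one-sided intervals
  obtain ⟨a0, ha0l, ha0r, ha0sub⟩ := mySide hr0 hr4 hx0A.2
  obtain ⟨a1, ha1l, ha1r, ha1sub⟩ := mySide hr0 hr4 hx1B.1
  -- lower bound for A-interval, upper bound for B-interval
  have hdA : ENNReal.ofReal (3 * r / 4) ≤ volume (A ∩ Set.Ioc a0 (a0 + r)) :=
    myDense hr0 ha0sub hrA
  have hdB : ENNReal.ofReal (3 * r / 4) ≤ volume (B ∩ Set.Ioc a1 (a1 + r)) :=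
    myDense hr0 ha1sub hrB
  -- translate to integrals
  have hfin : ∀ (s : Set ℝ) (a : ℝ), volume (s ∩ Set.Ioc a (a + r)) ≠ ⊤ := fun s a =>
    ((measure_mono Set.inter_subset_right).trans_lt
      (by rw [Real.volume_Ioc]; exact ENNReal.ofReal_lt_top)).ne
  have hm0 : 3 * r / 4 ≤ ∫ x in a0..(a0 + r), g x := by
    rw [myMeas hmeas hval (by linarith : a0 ≤ a0 + r)]
    have : ENNReal.ofReal (3 * r / 4) ≤ volume (T ∩ Set.Ioc a0 (a0 + r)) :=
      le_trans hdA (measure_mono (Set.inter_subset_inter_left _ Set.inter_subset_left))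
    calc 3 * r / 4 = (ENNReal.ofReal (3 * r / 4)).toReal := by
          rw [ENNReal.toReal_ofReal (by linarith)]
      _ ≤ _ := ENNReal.toReal_mono (hfin T a0) this
  have hm1 : ∫ x in a1..(a1 + r), g x ≤ r / 4 := by
    rw [myMeas hmeas hval (by linarith : a1 ≤ a1 + r)]
    have hdisj : Disjoint (T ∩ Set.Ioc a1 (a1 + r)) (B ∩ Set.Ioc a1 (a1 + r)) := by
      rw [Set.disjoint_left]
      rintro y ⟨hyT, _⟩ ⟨hyB, _⟩
      exact hyB.2 hyT
    have hsum : volume (T ∩ Set.Ioc a1 (a1 + r)) + volume (B ∩ Set.Ioc a1 (a1 + r))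
        ≤ ENNReal.ofReal r := by
      rw [← measure_union hdisj (hBm.inter measurableSet_Ioc)]
      calc volume _ ≤ volume (Set.Ioc a1 (a1 + r)) := measure_mono (by
            rintro y (⟨_, hy⟩ | ⟨_, hy⟩) <;> exact hy)
        _ = ENNReal.ofReal r := by rw [Real.volume_Ioc]; congr 1; ring
    have hTle : volume (T ∩ Set.Ioc a1 (a1 + r)) ≤ ENNReal.ofReal (r / 4) := by
      have h2 : volume (T ∩ Set.Ioc a1 (a1 + r)) + ENNReal.ofReal (3 * r / 4)
          ≤ ENNReal.ofReal r :=
        le_trans (add_le_add_right hdB _) hsum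
      have h3 := ENNReal.le_sub_of_add_le_right ENNReal.ofReal_ne_top h2
      refine le_trans h3 (le_of_eq ?_)
      rw [← ENNReal.ofReal_sub _ (by linarith)]
      congr 1; ring
    calc (volume (T ∩ Set.Ioc a1 (a1 + r))).toReal
        ≤ (ENNReal.ofReal (r / 4)).toReal := ENNReal.toReal_mono ENNReal.ofReal_ne_top hTle
      _ = r / 4 := ENNReal.toReal_ofReal (by linarith)
  -- continuity of the sliding integral and IVT
  have hG : Continuous fun t : ℝ => ∫ x in (0:ℝ)..t, g x :=
    intervalIntegral.continuous_primitive (fun a b => myInt hmeas hval a b) 0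
  set φ : ℝ → ℝ := fun a => (∫ x in (0:ℝ)..(a + r), g x) - ∫ x in (0:ℝ)..a, g x with hφdef
  have hφc : Continuous φ := (hG.comp (continuous_id.add continuous_const)).sub hG
  have hφeq : ∀ a : ℝ, φ a = ∫ x in a..(a + r), g x := by
    intro a
    have := intervalIntegral.integral_add_adjacent_intervals
      (myInt hmeas hval 0 a) (myInt hmeas hval a (a + r))
    simp only [hφdef]
    linarith [this]
  have hmem : r / 2 ∈ Set.uIcc (φ a0) (φ a1) := by
    rw [Set.mem_uIcc]
    right
    constructor
    · rw [hφeq a1]; linarith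
    · rw [hφeq a0]; linarith
  obtain ⟨c, hcmem, hceq⟩ := intermediate_value_uIcc hφc.continuousOn hmem
  -- the interval [c, c+r] sits inside I0
  have hcl : -(1:ℝ)/2 ≤ c := le_trans (le_inf ha0l ha1l) hcmem.1
  have hcr : c + r < 1/2 := by
    have h4 : c ≤ max a0 a1 := hcmem.2
    have : max a0 a1 + r < 1/2 := by
      rcases max_cases a0 a1 with ⟨h5, _⟩ | ⟨h5, _⟩ <;> rw [h5] <;> linarith
    linarith
  -- apply the oscillation bound
  have habs := hosc' c (c + r) (by linarith) (fun y hy => ⟨by rcases hy with ⟨h5, h6⟩; linarith,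
    by rcases hy with ⟨h5, h6⟩; linarith⟩) (by linarith)
  rw [myDbl hmeas hval c (c + r)] at habs
  rw [hφeq c] at hceq
  rw [hceq] at habs
  have hr2 : (c + r - c) = r := by ring
  rw [hr2] at habs
  have : (1 / r ^ 2) * (2 * (r / 2) * r - 2 * (r / 2) ^ 2) = 1 / 2 := by
    field_simp
    ring
  rw [this] at habs
  linarith
end

section
/- For any measurable set S ⊆ [-1/2,1/2) with 0 < |S| < 1, and any ε > 0, there exists an interval Q ⊆ [-1/2,1/2) with |Q| < ε such that |Q ∩ S| = |Q ∩ Sᶜ| = |Q|/2. -/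
open MeasureTheory
open Set Filter Metric

lemma vol_split (S : Set ℝ) (hS : MeasurableSet S) {x y : ℝ} (hxy : x ≤ y) :
    volume (S ∩ Set.Iic y) = volume (S ∩ Set.Iic x) + volume (S ∩ Set.Ioc x y) := by
  rw [← measure_union ((Set.Iic_disjoint_Ioc le_rfl).mono
      Set.inter_subset_right Set.inter_subset_right) (hS.inter measurableSet_Ioc)]
  congr 1
  rw [← Set.inter_union_distrib_left, Set.Iic_union_Ioc_eq_Iic hxy]

lemma lipF (S : Set ℝ) (hS : MeasurableSet S) (hfin : volume S ≠ ⊤) :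
    LipschitzWith 1 (fun x => (volume (S ∩ Set.Iic x)).toReal) := by
  have fin : ∀ z : ℝ, volume (S ∩ Set.Iic z) ≠ ⊤ :=
    fun z => ne_top_of_le_ne_top hfin (measure_mono Set.inter_subset_left)
  have key : ∀ x y : ℝ, y ≤ x →
      dist (volume (S ∩ Set.Iic x)).toReal (volume (S ∩ Set.Iic y)).toReal ≤ dist x y := by
    intro x y h
    have hsplit := vol_split S hS h
    have hIoc : volume (S ∩ Set.Ioc y x) ≤ ENNReal.ofReal (x - y) := by
      calc volume (S ∩ Set.Ioc y x) ≤ volume (Set.Ioc y x) :=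
            measure_mono Set.inter_subset_right
        _ = ENNReal.ofReal (x - y) := by rw [Real.volume_Ioc]
    have hIocfin : volume (S ∩ Set.Ioc y x) ≠ ⊤ := ne_top_of_le_ne_top (by simp) hIoc
    rw [Real.dist_eq, Real.dist_eq, hsplit, ENNReal.toReal_add (fin y) hIocfin]
    have h1 : (volume (S ∩ Set.Ioc y x)).toReal ≤ x - y := by
      rw [← ENNReal.toReal_ofReal (by linarith : (0:ℝ) ≤ x - y)]
      exact ENNReal.toReal_mono (by simp) hIoc
    have h2 : (0:ℝ) ≤ (volume (S ∩ Set.Ioc y x)).toReal := ENNReal.toReal_nonneg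
    rw [abs_of_nonneg (by linarith), abs_of_nonneg (by linarith)]
    linarith
  refine LipschitzWith.of_dist_le_mul fun x y => ?_
  rw [NNReal.coe_one, one_mul]
  rcases le_total y x with h | h
  · exact key x y h
  · rw [dist_comm, dist_comm x y]; exact key y x h

/-- For any measurable `S ⊆ [-1/2,1/2)` with `0 < |S| < 1` and any `ε > 0`, there is an
interval `Q = [a,b] ⊆ [-1/2,1/2)` with `|Q| < ε` such that
`|Q ∩ S| = |Q ∩ Sᶜ| = |Q|/2`. -/
theorem stmt3 (S : Set ℝ) (hS : MeasurableSet S) (hsub : S ⊆ Set.Ico (-(1:ℝ)/2) (1/2))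
    (h0 : 0 < volume S) (h1 : volume S < 1) (ε : ℝ) (hε : 0 < ε) :
    ∃ a b : ℝ, a < b ∧ Set.Icc a b ⊆ Set.Ico (-(1:ℝ)/2) (1/2) ∧ b - a < ε ∧
      volume (Set.Icc a b ∩ S) = ENNReal.ofReal ((b - a) / 2) ∧
      volume (Set.Icc a b \ S) = ENNReal.ofReal ((b - a) / 2) := by
  have hfinS : volume S ≠ ⊤ := ne_top_of_lt h1
  set I : Set ℝ := Set.Ioo (-(1:ℝ)/2) (1/2) with hIdef
  have hvolI : volume I = 1 := by
    rw [hIdef, Real.volume_Ioo]; norm_num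
  set T : Set ℝ := I \ S with hTdef
  have hT0 : 0 < volume T := by
    by_contra h
    push_neg at h
    have hT : volume T = 0 := le_antisymm h zero_le
    have hIsub : I ⊆ S ∪ T := fun x hx => by
      by_cases hxS : x ∈ S
      · exact Or.inl hxS
      · exact Or.inr ⟨hx, hxS⟩
    have : volume I ≤ volume S + volume T := (measure_mono hIsub).trans (measure_union_le _ _)
    rw [hvolI, hT, add_zero] at this
    exact absurd this (not_le.2 h1)
  -- density theorem
  have hA := Besicovitch.ae_tendsto_measure_inter_div_of_measurableSet (volume : Measure ℝ) hS
  -- get x₁ : density point of S, x₁ ≠ -1/2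
  have hS0 : volume.restrict S ≠ 0 := by rw [Ne, Measure.restrict_eq_zero]; exact h0.ne'
  haveI : (ae (volume.restrict S)).NeBot := ae_neBot.2 hS0
  have h2' : ∀ᵐ x ∂(volume : Measure ℝ), x ≠ -(1:ℝ)/2 := by
    rw [ae_iff]
    have : {a : ℝ | ¬a ≠ -(1:ℝ)/2} = {-(1:ℝ)/2} := by ext x; simp
    rw [this]; exact measure_singleton _
  obtain ⟨x₁, hx₁S, hx₁ne, hx₁d⟩ :=
    ((ae_restrict_mem hS).and ((ae_restrict_of_ae h2').and (ae_restrict_of_ae hA))).exists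
  have hx₁I : x₁ ∈ I := by
    have := hsub hx₁S
    exact ⟨lt_of_le_of_ne this.1 (Ne.symm hx₁ne), this.2⟩
  have hx₁t : Tendsto (fun r => volume (S ∩ closedBall x₁ r) / volume (closedBall x₁ r))
      (nhdsWithin 0 (Set.Ioi 0)) (nhds 1) := by
    rwa [Set.indicator_of_mem hx₁S] at hx₁d
  -- get x₀ : density point of Sᶜ
  have hT0' : volume.restrict T ≠ 0 := by rw [Ne, Measure.restrict_eq_zero]; exact hT0.ne'
  haveI : (ae (volume.restrict T)).NeBot := ae_neBot.2 hT0'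
  have hTm : MeasurableSet T := measurableSet_Ioo.diff hS
  obtain ⟨x₀, hx₀T, hx₀d⟩ :=
    ((ae_restrict_mem hTm).and (ae_restrict_of_ae hA)).exists
  have hx₀I : x₀ ∈ I := hx₀T.1
  have hx₀t : Tendsto (fun r => volume (S ∩ closedBall x₀ r) / volume (closedBall x₀ r))
      (nhdsWithin 0 (Set.Ioi 0)) (nhds 0) := by
    rwa [Set.indicator_of_notMem hx₀T.2] at hx₀d
  -- pick δ
  obtain ⟨hx₁I1, hx₁I2⟩ := hx₁I
  obtain ⟨hx₀I1, hx₀I2⟩ := hx₀I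
  set c : ℝ := min (ε/2) (min (min (1/2 - x₁) (x₁ + 1/2)) (min (1/2 - x₀) (x₀ + 1/2))) with hcdef
  have hc : 0 < c := by
    simp only [hcdef, lt_min_iff]
    refine ⟨by linarith, ⟨by linarith, by linarith⟩, by linarith, by linarith⟩
  have ev1 : ∀ᶠ r in nhdsWithin (0:ℝ) (Set.Ioi 0),
      ENNReal.ofReal (3/4) < volume (S ∩ closedBall x₁ r) / volume (closedBall x₁ r) :=
    hx₁t.eventually (eventually_gt_nhds (ENNReal.ofReal_lt_one.2 (by norm_num)))
  have ev0 : ∀ᶠ r in nhdsWithin (0:ℝ) (Set.Ioi 0),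
      volume (S ∩ closedBall x₀ r) / volume (closedBall x₀ r) < ENNReal.ofReal (1/4) :=
    hx₀t.eventually (eventually_lt_nhds (ENNReal.ofReal_pos.2 (by norm_num)))
  have evc : ∀ᶠ r in nhdsWithin (0:ℝ) (Set.Ioi 0), r < c :=
    eventually_nhdsWithin_of_eventually_nhds (eventually_lt_nhds hc)
  have evp : ∀ᶠ r in nhdsWithin (0:ℝ) (Set.Ioi 0), 0 < r := eventually_mem_nhdsWithin
  obtain ⟨δ, hδ1, hδ0, hδc, hδp⟩ := (ev1.and (ev0.and (evc.and evp))).exists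
  have hδc' : δ < c := hδc
  have hδε : δ < ε/2 := lt_of_lt_of_le hδc' (min_le_left _ _)
  have hδ11 : δ < 1/2 - x₁ := lt_of_lt_of_le hδc'
    ((min_le_right _ _).trans ((min_le_left _ _).trans (min_le_left _ _)))
  have hδ12 : δ < x₁ + 1/2 := lt_of_lt_of_le hδc'
    ((min_le_right _ _).trans ((min_le_left _ _).trans (min_le_right _ _)))
  have hδ01 : δ < 1/2 - x₀ := lt_of_lt_of_le hδc'
    ((min_le_right _ _).trans ((min_le_right _ _).trans (min_le_left _ _)))
  have hδ02 : δ < x₀ + 1/2 := lt_of_lt_of_le hδc'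
    ((min_le_right _ _).trans ((min_le_right _ _).trans (min_le_right _ _)))
  -- closedBall volumes
  have hcb : ∀ x : ℝ, volume (closedBall x δ) = ENNReal.ofReal (2*δ) := fun x => by
    rw [Real.volume_closedBall]
  have hcbne : ENNReal.ofReal (2*δ) ≠ 0 := by
    simp only [Ne, ENNReal.ofReal_eq_zero, not_le]; linarith
  have hcbnt : ENNReal.ofReal (2*δ) ≠ ⊤ := ENNReal.ofReal_ne_top
  -- measure bounds
  have hm1 : ENNReal.ofReal δ < volume (S ∩ closedBall x₁ δ) := by
    rw [hcb x₁] at hδ1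
    rw [ENNReal.lt_div_iff_mul_lt (Or.inl hcbne) (Or.inl hcbnt)] at hδ1
    refine lt_of_le_of_lt ?_ hδ1
    rw [← ENNReal.ofReal_mul (by norm_num : (0:ℝ) ≤ 3/4)]
    exact ENNReal.ofReal_le_ofReal (by linarith)
  have hm0 : volume (S ∩ closedBall x₀ δ) < ENNReal.ofReal δ := by
    rw [hcb x₀] at hδ0
    rw [ENNReal.div_lt_iff (Or.inl hcbne) (Or.inl hcbnt)] at hδ0
    refine lt_of_lt_of_le hδ0 ?_
    rw [← ENNReal.ofReal_mul (by norm_num : (0:ℝ) ≤ 1/4)]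
    exact ENNReal.ofReal_le_ofReal (by linarith)
  -- the sliding function
  set F : ℝ → ℝ := fun x => (volume (S ∩ Set.Iic x)).toReal with hFdef
  have hFcont : Continuous F := (lipF S hS hfinS).continuous
  set G : ℝ → ℝ := fun x => (volume (S ∩ Set.Icc x (x + 2*δ))).toReal with hGdef
  have hIccIoc : ∀ x y : ℝ, volume (S ∩ Set.Icc x y) = volume (S ∩ Set.Ioc x y) := by
    intro x y
    refine measure_congr (Filter.EventuallyEq.inter (Filter.EventuallyEq.refl _ _) ?_)
    exact (Ioc_ae_eq_Icc (μ := volume) (a := x) (b := y)).symm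
  have hGeq : ∀ x : ℝ, G x = F (x + 2*δ) - F x := by
    intro x
    have hsplit := vol_split S hS (by linarith : x ≤ x + 2*δ)
    have finx : volume (S ∩ Set.Iic x) ≠ ⊤ :=
      ne_top_of_le_ne_top hfinS (measure_mono Set.inter_subset_left)
    have finIoc : volume (S ∩ Set.Ioc x (x + 2*δ)) ≠ ⊤ :=
      ne_top_of_le_ne_top hfinS (measure_mono Set.inter_subset_left)
    simp only [hGdef, hFdef]
    rw [hIccIoc, hsplit, ENNReal.toReal_add finx finIoc]
    ring
  have hGcont : Continuous G := by
    have : G = fun x => F (x + 2*δ) - F x := funext hGeq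
    rw [this]
    exact (hFcont.comp (continuous_id.add continuous_const)).sub hFcont
  have hcbIcc : ∀ x : ℝ, S ∩ Set.Icc (x - δ) ((x - δ) + 2*δ) = S ∩ closedBall x δ := by
    intro x
    rw [Real.closedBall_eq_Icc]
    congr 1
    ring
  have finm : ∀ s : Set ℝ, volume (S ∩ s) ≠ ⊤ :=
    fun s => ne_top_of_le_ne_top hfinS (measure_mono Set.inter_subset_left)
  have hG1 : δ < G (x₁ - δ) := by
    simp only [hGdef]
    rw [hcbIcc x₁]
    exact (ENNReal.ofReal_lt_iff_lt_toReal hδp.le (finm _)).1 hm1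
  have hG0 : G (x₀ - δ) < δ := by
    simp only [hGdef]
    rw [hcbIcc x₀]
    exact ENNReal.toReal_lt_of_lt_ofReal hm0
  -- IVT
  have hmem : δ ∈ Set.uIcc (G (x₀ - δ)) (G (x₁ - δ)) := by
    rw [Set.mem_uIcc]
    exact Or.inl ⟨hG0.le, hG1.le⟩
  obtain ⟨a, ha, hGa⟩ := intermediate_value_uIcc (hGcont.continuousOn) hmem
  refine ⟨a, a + 2*δ, by linarith, ?_, by linarith, ?_, ?_⟩
  · -- containment
    intro z hz
    rw [Set.mem_uIcc] at ha
    rcases ha with ⟨ha1, ha2⟩ | ⟨ha1, ha2⟩ <;>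
      exact ⟨by simp only [Set.mem_Icc] at hz; linarith [hz.1],
             by simp only [Set.mem_Icc] at hz; linarith [hz.2]⟩
  · -- half measure
    have : volume (Set.Icc a (a + 2*δ) ∩ S) = ENNReal.ofReal δ := by
      rw [Set.inter_comm]
      have hfin := finm (Set.Icc a (a + 2*δ))
      rw [← ENNReal.ofReal_toReal hfin]
      exact congrArg ENNReal.ofReal hGa
    rw [this]
    congr 1
    ring
  · have hsum := measure_inter_add_diff (Set.Icc a (a + 2*δ)) hS (μ := volume)
    have hIccv : volume (Set.Icc a (a + 2*δ)) = ENNReal.ofReal δ + ENNReal.ofReal δ := by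
      rw [Real.volume_Icc, ← ENNReal.ofReal_add hδp.le hδp.le]
      congr 1
      ring
    have hhalf : volume (Set.Icc a (a + 2*δ) ∩ S) = ENNReal.ofReal δ := by
      rw [Set.inter_comm]
      have hfin := finm (Set.Icc a (a + 2*δ))
      rw [← ENNReal.ofReal_toReal hfin]
      exact congrArg ENNReal.ofReal hGa
    rw [hhalf, hIccv] at hsum
    have : volume (Set.Icc a (a + 2*δ) \ S) = ENNReal.ofReal δ :=
      (ENNReal.add_right_inj ENNReal.ofReal_ne_top).1 hsum
    rw [this]
    congr 1
    ring
end
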